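/- arXiv:2103.00715 — 4 statements merged into one kernel-verified Lean document; each statement's English description precedes it below -/
import Mathlib

section
/- Let a < b be reals. On D_{a,b}([0,∞),ℝ) the fast-forwarding maps commute: N_a^l(N_b^r(f)) = N_b^r(N_a^l(f)) for every f ∈ D_{a,b}([0,∞),ℝ). Moreover, both compositions equal the map f ↦ f ∘ (A^f_{(a,b)})^{−1}, where A^f_{(a,b)}(t) = ∫₀^t 1{f(z) ∈ (a,b)} dz and (A^f_{(a,b)})^{−1}(t) = inf{s>0 : A^f_{(a,b)}(s) > t}. -/
open MeasureTheory Set Filter Topology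

noncomputable section

/-- `f` is càdlàg on `[0,∞)`: right-continuous at every `t ≥ 0` and with left limits
at every `t > 0`. -/
def IsCadlag (f : ℝ → ℝ) : Prop :=
  (∀ t : ℝ, 0 ≤ t → Tendsto f (𝓝[≥] t) (𝓝 (f t))) ∧
  (∀ t : ℝ, 0 < t → ∃ L : ℝ, Tendsto f (𝓝[<] t) (𝓝 L))

/-- `A_f(t) = ∫₀^t 1{f(z) > a} dz`. -/
noncomputable def occUpper (a : ℝ) (f : ℝ → ℝ) (t : ℝ) : ℝ :=
  ∫ z in (0:ℝ)..t, ({z : ℝ | a < f z}.indicator (fun _ => (1:ℝ)) z)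

/-- `A_f^{−1}(t) = inf{s > 0 : A_f(s) > t}` (occupation time of `(a,∞)`). -/
noncomputable def occUpperInv (a : ℝ) (f : ℝ → ℝ) (t : ℝ) : ℝ :=
  sInf {s : ℝ | 0 < s ∧ t < occUpper a f s}

/-- The left fast-forwarding map at level `a`: `N_a^l(f) = f ∘ A_f^{−1}`. -/
noncomputable def ffLeft (a : ℝ) (f : ℝ → ℝ) : ℝ → ℝ := fun t => f (occUpperInv a f t)

/-- `A_f(t) = ∫₀^t 1{f(z) < b} dz`. -/
noncomputable def occLower (b : ℝ) (f : ℝ → ℝ) (t : ℝ) : ℝ :=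
  ∫ z in (0:ℝ)..t, ({z : ℝ | f z < b}.indicator (fun _ => (1:ℝ)) z)

/-- `A_f^{−1}(t) = inf{s > 0 : A_f(s) > t}` (occupation time of `(−∞,b)`). -/
noncomputable def occLowerInv (b : ℝ) (f : ℝ → ℝ) (t : ℝ) : ℝ :=
  sInf {s : ℝ | 0 < s ∧ t < occLower b f s}

/-- The right fast-forwarding map at level `b`: `N_b^r(f) = f ∘ A_f^{−1}`. -/
noncomputable def ffRight (b : ℝ) (f : ℝ → ℝ) : ℝ → ℝ := fun t => f (occLowerInv b f t)

/-- Membership in `D_{a,∞}([0,∞),ℝ)`: the Lebesgue time spent in `(a,∞)` is infinite. -/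
def InfAbove (a : ℝ) (f : ℝ → ℝ) : Prop := volume {t : ℝ | 0 ≤ t ∧ a < f t} = ⊤

/-- Membership in `D_{−∞,b}([0,∞),ℝ)`: the Lebesgue time spent in `(−∞,b)` is infinite. -/
def InfBelow (b : ℝ) (f : ℝ → ℝ) : Prop := volume {t : ℝ | 0 ≤ t ∧ f t < b} = ⊤

/-- Membership in `D_{a,b}([0,∞),ℝ)`: the Lebesgue time spent in `(a,b)` is infinite. -/
def InfBetween (a b : ℝ) (f : ℝ → ℝ) : Prop :=
  volume {t : ℝ | 0 ≤ t ∧ f t ∈ Ioo a b} = ⊤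

/-- Condition (Nl): whenever `f ≥ a+ε` on `[t1,t2) ∪ [t3,t4)` and `f ≤ a` on `[t2,t3)`,
the supremum of `f` over `[t2,t3)` is strictly below `a`. -/
def CondNl (a : ℝ) (f : ℝ → ℝ) : Prop :=
  ∀ ε : ℝ, 0 < ε → ∀ t1 t2 t3 t4 : ℝ, t1 < t2 → t2 < t3 → t3 < t4 →
    (∀ t ∈ Ico t1 t2, a + ε ≤ f t) → (∀ t ∈ Ico t3 t4, a + ε ≤ f t) →
    (∀ t ∈ Ico t2 t3, f t ≤ a) →
    ∃ c : ℝ, c < a ∧ ∀ t ∈ Ico t2 t3, f t ≤ c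

/-- Condition (Nr): whenever `f ≤ b−ε` on `[t1,t2) ∪ [t3,t4)` and `f ≥ b` on `[t2,t3)`,
the infimum of `f` over `[t2,t3)` is strictly above `b`. -/
def CondNr (b : ℝ) (f : ℝ → ℝ) : Prop :=
  ∀ ε : ℝ, 0 < ε → ∀ t1 t2 t3 t4 : ℝ, t1 < t2 → t2 < t3 → t3 < t4 →
    (∀ t ∈ Ico t1 t2, f t ≤ b - ε) → (∀ t ∈ Ico t3 t4, f t ≤ b - ε) →
    (∀ t ∈ Ico t2 t3, b ≤ f t) →
    ∃ c : ℝ, b < c ∧ ∀ t ∈ Ico t2 t3, c ≤ f t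

/-- `A^f_{(a,b)}(t) = ∫₀^t 1{f(z) ∈ (a,b)} dz`. -/
noncomputable def occMid (a b : ℝ) (f : ℝ → ℝ) (t : ℝ) : ℝ :=
  ∫ z in (0:ℝ)..t, ({z : ℝ | f z ∈ Ioo a b}.indicator (fun _ => (1:ℝ)) z)

/-- `(A^f_{(a,b)})^{−1}(t) = inf{s > 0 : A^f_{(a,b)}(s) > t}`. -/
noncomputable def occMidInv (a b : ℝ) (f : ℝ → ℝ) (t : ℝ) : ℝ :=
  sInf {s : ℝ | 0 < s ∧ t < occMid a b f s}

namespace FF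

/-- occupation time of `S` in `(0, t]`. -/
noncomputable def occ (S : Set ℝ) (t : ℝ) : ℝ := (volume (S ∩ Set.Ioc 0 t)).toReal

lemma meas_ne_top (S : Set ℝ) (t : ℝ) : volume (S ∩ Set.Ioc 0 t) ≠ ⊤ :=
  (lt_of_le_of_lt (measure_mono inter_subset_right) measure_Ioc_lt_top).ne

lemma vol_eq (S : Set ℝ) (t : ℝ) :
    volume (S ∩ Set.Ioc 0 t) = ENNReal.ofReal (occ S t) :=
  (ENNReal.ofReal_toReal (meas_ne_top S t)).symm

lemma occ_nonneg (S : Set ℝ) (t : ℝ) : 0 ≤ occ S t := ENNReal.toReal_nonneg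

lemma occ_mono (S : Set ℝ) : Monotone (occ S) := fun s t h =>
  ENNReal.toReal_mono (meas_ne_top S t)
    (measure_mono (inter_subset_inter_right _ (Ioc_subset_Ioc_right h)))

lemma occ_nonpos (S : Set ℝ) {t : ℝ} (h : t ≤ 0) : occ S t = 0 := by
  have : Set.Ioc (0:ℝ) t = ∅ := Set.Ioc_eq_empty (by linarith)
  simp [occ, this]

lemma occ_le_self (S : Set ℝ) {t : ℝ} (ht : 0 ≤ t) : occ S t ≤ t := by
  have h : volume (S ∩ Set.Ioc 0 t) ≤ volume (Set.Ioc (0:ℝ) t) :=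
    measure_mono inter_subset_right
  rw [Real.volume_Ioc, sub_zero] at h
  exact ENNReal.toReal_le_of_le_ofReal ht h

lemma occ_split (S : Set ℝ) (hS : MeasurableSet S) {u v : ℝ} (h0 : 0 ≤ u) (huv : u ≤ v) :
    occ S v = occ S u + (volume (S ∩ Set.Ioc u v)).toReal := by
  have hd : Disjoint (S ∩ Set.Ioc 0 u) (S ∩ Set.Ioc u v) := by
    refine Set.disjoint_left.2 ?_
    rintro z ⟨-, -, hz1⟩ ⟨-, hz2, -⟩
    exact absurd hz1 (not_le.2 hz2)
  have hu : S ∩ Set.Ioc 0 v = (S ∩ Set.Ioc 0 u) ∪ (S ∩ Set.Ioc u v) := by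
    rw [← Set.inter_union_distrib_left, Set.Ioc_union_Ioc_eq_Ioc h0 huv]
  have hne : volume (S ∩ Set.Ioc u v) ≠ ⊤ :=
    (lt_of_le_of_lt (measure_mono inter_subset_right) measure_Ioc_lt_top).ne
  rw [occ, hu, measure_union hd (hS.inter measurableSet_Ioc),
    ENNReal.toReal_add (meas_ne_top S u) hne]
  rfl

lemma occ_lip (S : Set ℝ) {u v : ℝ} (huv : u ≤ v) : occ S v ≤ occ S u + (v - u) := by
  have hsub : S ∩ Set.Ioc 0 v ⊆ (S ∩ Set.Ioc 0 u) ∪ Set.Ioc u v := by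
    rintro z ⟨hzS, hz0, hzv⟩
    rcases le_or_gt z u with h | h
    · exact Or.inl ⟨hzS, hz0, h⟩
    · exact Or.inr ⟨h, hzv⟩
  have h1 : volume (S ∩ Set.Ioc 0 v) ≤ ENNReal.ofReal (occ S u) + ENNReal.ofReal (v - u) := by
    calc volume (S ∩ Set.Ioc 0 v) ≤ volume (S ∩ Set.Ioc 0 u) + volume (Set.Ioc u v) :=
          (measure_mono hsub).trans (measure_union_le _ _)
      _ = _ := by rw [vol_eq, Real.volume_Ioc]
  rw [← ENNReal.ofReal_add (occ_nonneg S u) (sub_nonneg.2 huv)] at h1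
  exact ENNReal.toReal_le_of_le_ofReal (add_nonneg (occ_nonneg S u) (sub_nonneg.2 huv)) h1

lemma occ_unbounded (S : Set ℝ) (hTop : volume (S ∩ Set.Ioi 0) = ⊤) (C : ℝ) :
    ∃ s : ℝ, 0 < s ∧ C < occ S s := by
  by_contra h
  push_neg at h
  have hb : ∀ n : ℕ, volume (S ∩ Set.Ioc 0 (n:ℝ)) ≤ ENNReal.ofReal C := by
    intro n
    rcases eq_or_lt_of_le (Nat.cast_nonneg n : (0:ℝ) ≤ n) with h0 | h0
    · have : Set.Ioc (0:ℝ) (n:ℝ) = ∅ := Set.Ioc_eq_empty (by rw [← h0]; exact lt_irrefl 0)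
      simp [this]
    · rw [vol_eq]; exact ENNReal.ofReal_le_ofReal (h _ h0)
  have hU : S ∩ Set.Ioi 0 = ⋃ n : ℕ, S ∩ Set.Ioc 0 (n:ℝ) := by
    ext z
    simp only [mem_inter_iff, mem_Ioi, mem_iUnion, mem_Ioc]
    constructor
    · rintro ⟨hzS, hz⟩
      obtain ⟨n, hn⟩ := exists_nat_ge z
      exact ⟨n, hzS, hz, hn⟩
    · rintro ⟨n, hzS, hz, _⟩
      exact ⟨hzS, hz⟩
  have hdir : Directed (· ⊆ ·) (fun n : ℕ => S ∩ Set.Ioc 0 (n:ℝ)) := by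
    intro m n
    refine ⟨max m n, inter_subset_inter_right _ (Ioc_subset_Ioc_right ?_),
      inter_subset_inter_right _ (Ioc_subset_Ioc_right ?_)⟩ <;> push_cast <;>
      simp [le_max_left, le_max_right]
  rw [hU, hdir.measure_iUnion] at hTop
  have : (⨆ n : ℕ, volume (S ∩ Set.Ioc 0 (n:ℝ))) ≤ ENNReal.ofReal C := iSup_le hb
  rw [hTop] at this
  exact absurd this (by simp)


noncomputable def occI (S : Set ℝ) (t : ℝ) : ℝ := sInf {s : ℝ | 0 < s ∧ t < occ S s}

lemma setN_bdd (S : Set ℝ) (t : ℝ) : BddBelow {s : ℝ | 0 < s ∧ t < occ S s} :=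
  ⟨0, fun s hs => hs.1.le⟩

lemma setN_nonempty (S : Set ℝ) (hTop : volume (S ∩ Set.Ioi 0) = ⊤) (t : ℝ) :
    {s : ℝ | 0 < s ∧ t < occ S s}.Nonempty := by
  obtain ⟨s, h1, h2⟩ := occ_unbounded S hTop t
  exact ⟨s, h1, h2⟩

lemma occI_nonneg (S : Set ℝ) (hTop : volume (S ∩ Set.Ioi 0) = ⊤) (t : ℝ) : 0 ≤ occI S t :=
  le_csInf (setN_nonempty S hTop t) fun s hs => hs.1.le

lemma occI_mono (S : Set ℝ) (hTop : volume (S ∩ Set.Ioi 0) = ⊤) : Monotone (occI S) :=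
  fun t t' h => csInf_le_csInf (setN_bdd S t) (setN_nonempty S hTop t')
    (fun s hs => ⟨hs.1, lt_of_le_of_lt h hs.2⟩)

lemma occ_occI (S : Set ℝ) (hTop : volume (S ∩ Set.Ioi 0) = ⊤) {t : ℝ} (ht : 0 ≤ t) :
    occ S (occI S t) = t := by
  set τ := occI S t with hτdef
  have hτ0 : 0 ≤ τ := occI_nonneg S hTop t
  have hge : t ≤ occ S τ := by
    refine le_of_forall_pos_le_add fun ε hε => ?_
    have hlt : sInf {s : ℝ | 0 < s ∧ t < occ S s} < τ + ε := by
      show occI S t < τ + ε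
      rw [← hτdef]; linarith
    obtain ⟨s, hsN, hs⟩ := (csInf_lt_iff (setN_bdd S t) (setN_nonempty S hTop t)).1 hlt
    have h2 : occ S s ≤ occ S τ + ε := by
      calc occ S s ≤ occ S (τ + ε) := occ_mono S hs.le
        _ ≤ occ S τ + ε := by have := occ_lip S (by linarith : τ ≤ τ + ε); linarith
    linarith [hsN.2]
  have hle : occ S τ ≤ t := by
    by_contra hcon
    push_neg at hcon
    have hτpos : 0 < τ := by
      by_contra h0
      push_neg at h0
      rw [occ_nonpos S h0] at hcon
      linarith
    set δ := min τ (occ S τ - t) with hδdef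
    have hδ : 0 < δ := lt_min hτpos (by linarith)
    have hδτ : δ ≤ τ := min_le_left _ _
    have hδ2 : δ ≤ occ S τ - t := min_le_right _ _
    have hmem : τ - δ/2 ∈ {s : ℝ | 0 < s ∧ t < occ S s} := by
      constructor
      · linarith
      · have := occ_lip S (by linarith : τ - δ/2 ≤ τ)
        have : occ S τ - δ/2 ≤ occ S (τ - δ/2) := by linarith
        linarith
    have h5 : occI S t ≤ τ - δ/2 := csInf_le (setN_bdd S t) hmem
    rw [← hτdef] at h5
    linarith
  linarith

lemma occI_lt_iff (S : Set ℝ) (hTop : volume (S ∩ Set.Ioi 0) = ⊤) {t : ℝ} (ht : 0 ≤ t)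
    {s : ℝ} (hs : 0 < s) : occI S t < s ↔ t < occ S s := by
  constructor
  · intro h
    obtain ⟨s₀, hs₀, h₀⟩ := (csInf_lt_iff (setN_bdd S t) (setN_nonempty S hTop t)).1 h
    exact lt_of_lt_of_le hs₀.2 (occ_mono S h₀.le)
  · intro h
    have h1 : occI S t ≤ s := csInf_le (setN_bdd S t) ⟨hs, h⟩
    rcases lt_or_eq_of_le h1 with h2 | h2
    · exact h2
    · exfalso
      have h3 := occ_occI S hTop ht
      rw [h2] at h3
      rw [h3] at h
      exact lt_irrefl t h
  
lemma le_occI (S : Set ℝ) (hTop : volume (S ∩ Set.Ioi 0) = ⊤) {t : ℝ} (ht : 0 ≤ t) :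
    t ≤ occI S t := by
  have h1 := occ_occI S hTop ht
  have h2 := occ_le_self S (occI_nonneg S hTop t)
  linarith


lemma occI_measurable (S : Set ℝ) (hTop : volume (S ∩ Set.Ioi 0) = ⊤) :
    Measurable (occI S) := (occI_mono S hTop).measurable

lemma map_occI (S : Set ℝ) (hS : MeasurableSet S) (hTop : volume (S ∩ Set.Ioi 0) = ⊤) :
    Measure.map (occI S) (volume.restrict (Set.Ioi 0)) = volume.restrict (S ∩ Set.Ioi 0) := by
  have hm := occI_measurable S hTop
  have hval : ∀ u v : ℝ, u < v →
      Measure.map (occI S) (volume.restrict (Set.Ioi 0)) (Set.Ioc u v)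
        = ENNReal.ofReal (occ S v - occ S u) := by
    intro u v huv
    rw [Measure.map_apply hm measurableSet_Ioc,
      Measure.restrict_apply (hm measurableSet_Ioc)]
    rcases le_or_gt v 0 with hv | hv
    · have hempty : occI S ⁻¹' Set.Ioc u v ∩ Set.Ioi 0 = ∅ := by
        ext z
        simp only [mem_inter_iff, mem_preimage, mem_Ioc, mem_Ioi, mem_empty_iff_false,
          iff_false, not_and, and_imp]
        intro _ h2 hz
        exact absurd (lt_of_lt_of_le hz (le_occI S hTop hz.le)) (not_lt.2 (h2.trans hv))
      rw [hempty, occ_nonpos S hv, occ_nonpos S (le_of_lt (lt_of_lt_of_le huv hv))]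
      simp
    · set c := occ S u with hcdef
      set d := occ S v with hddef
      have hcd : c ≤ d := occ_mono S huv.le
      have hc0 : 0 ≤ c := occ_nonneg S u
      have hsub1 : Set.Ioo c d ⊆ occI S ⁻¹' Set.Ioc u v ∩ Set.Ioi 0 := by
        rintro z ⟨hz1, hz2⟩
        have hz0 : 0 < z := lt_of_le_of_lt hc0 hz1
        have hzv : occI S z ≤ v := ((occI_lt_iff S hTop hz0.le hv).2 hz2).le
        have huz : u < occI S z := by
          rcases le_or_gt u 0 with hu | hu
          · exact lt_of_le_of_lt hu (lt_of_lt_of_le hz0 (le_occI S hTop hz0.le))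
          · by_contra hcon
            push_neg at hcon
            rcases lt_or_eq_of_le hcon with h | h
            · have := (occI_lt_iff S hTop hz0.le hu).1 h
              rw [← hcdef] at this
              linarith
            · have h2 := occ_occI S hTop hz0.le
              rw [h, ← hcdef] at h2
              linarith
        exact ⟨⟨huz, hzv⟩, hz0⟩
      have hsub2 : occI S ⁻¹' Set.Ioc u v ∩ Set.Ioi 0 ⊆ Set.Icc c d := by
        rintro z ⟨⟨huz, hzv⟩, hz0⟩
        rw [mem_Ioi] at hz0
        constructor
        · rcases le_or_gt u 0 with hu | hu
          · rw [hcdef, occ_nonpos S hu]; exact hz0.le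
          · by_contra hcon
            push_neg at hcon
            have := (occI_lt_iff S hTop hz0.le hu).2 (by rw [← hcdef]; exact hcon)
            exact absurd huz (not_lt.2 this.le)
        · refine le_of_forall_pos_le_add fun ε hε => ?_
          have h1 : occI S z < v + ε := lt_of_le_of_lt hzv (by linarith)
          have h2 : z < occ S (v + ε) := (occI_lt_iff S hTop hz0.le (by linarith)).1 h1
          have h3 := occ_lip S (by linarith : v ≤ v + ε)
          rw [← hddef] at h3
          linarith
      refine le_antisymm ?_ ?_
      · have h := (measure_mono hsub2 :
          volume (occI S ⁻¹' Set.Ioc u v ∩ Set.Ioi 0) ≤ volume (Set.Icc c d))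
        rwa [Real.volume_Icc] at h
      · have h := (measure_mono hsub1 :
          volume (Set.Ioo c d) ≤ volume (occI S ⁻¹' Set.Ioc u v ∩ Set.Ioi 0))
        rwa [Real.volume_Ioo] at h
  have hval' : ∀ u v : ℝ, u < v →
      volume.restrict (S ∩ Set.Ioi 0) (Set.Ioc u v) = ENNReal.ofReal (occ S v - occ S u) := by
    intro u v huv
    rw [Measure.restrict_apply measurableSet_Ioc]
    rcases le_or_gt v 0 with hv | hv
    · have hempty : Set.Ioc u v ∩ (S ∩ Set.Ioi 0) = ∅ := by
        ext z
        simp only [mem_inter_iff, mem_Ioc, mem_Ioi, mem_empty_iff_false, iff_false, not_and,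
          and_imp]
        intro _ h2 _ hz
        exact absurd (lt_of_lt_of_le hz h2) (not_lt.2 hv)
      rw [hempty, occ_nonpos S hv, occ_nonpos S (le_of_lt (lt_of_lt_of_le huv hv))]
      simp
    · set u' := max u 0 with hu'def
      have hset : Set.Ioc u v ∩ (S ∩ Set.Ioi 0) = S ∩ Set.Ioc u' v := by
        ext z
        simp only [mem_inter_iff, mem_Ioc, mem_Ioi, hu'def, max_lt_iff]
        tauto
      have hsplit := occ_split S hS (le_max_right u 0) (max_le huv.le hv.le)
      have hne : volume (S ∩ Set.Ioc u' v) ≠ ⊤ :=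
        (lt_of_le_of_lt (measure_mono inter_subset_right) measure_Ioc_lt_top).ne
      have hval2 : volume (S ∩ Set.Ioc u' v) = ENNReal.ofReal (occ S v - occ S u') := by
        rw [← ENNReal.ofReal_toReal hne]
        congr 1
        linarith
      have hocc : occ S u' = occ S u := by
        rcases le_or_gt u 0 with hu | hu
        · rw [hu'def, max_eq_right hu, occ_nonpos S le_rfl, occ_nonpos S hu]
        · rw [hu'def, max_eq_left hu.le]
      rw [hset, hval2, hocc]
  refine Measure.ext_of_Ioc' _ _ (fun u v huv => ?_) (fun u v huv => ?_)
  · rw [hval u v huv]; exact ENNReal.ofReal_ne_top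
  · rw [hval u v huv, hval' u v huv]

lemma key (E S : Set ℝ) (hE : MeasurableSet E) (hS : MeasurableSet S)
    (hTop : volume (S ∩ Set.Ioi 0) = ⊤) {s : ℝ} (hs : 0 < s) :
    volume (occI S ⁻¹' E ∩ Set.Ioc 0 s) = volume ((E ∩ S) ∩ Set.Ioc 0 (occI S s)) := by
  have hm := occI_measurable S hTop
  have hset : occI S ⁻¹' E ∩ Set.Ioc 0 s
      = occI S ⁻¹' (E ∩ Set.Ioc 0 (occI S s)) ∩ Set.Ioi 0 := by
    ext z
    simp only [mem_inter_iff, mem_preimage, mem_Ioc, mem_Ioi]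
    constructor
    · rintro ⟨hzE, hz0, hzs⟩
      exact ⟨⟨hzE, lt_of_lt_of_le hz0 (le_occI S hTop hz0.le),
        occI_mono S hTop hzs⟩, hz0⟩
    · rintro ⟨⟨hzE, h0b, hbb⟩, hz0⟩
      refine ⟨hzE, hz0, ?_⟩
      by_contra hcon
      push_neg at hcon
      have h1 : occI S s < occI S z := by
        refine (occI_lt_iff S hTop hs.le h0b).2 ?_
        rw [occ_occI S hTop hz0.le]
        exact hcon
      exact absurd hbb (not_le.2 h1)
  have hmeas : MeasurableSet (occI S ⁻¹' (E ∩ Set.Ioc 0 (occI S s))) :=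
    hm (hE.inter measurableSet_Ioc)
  rw [hset, ← Measure.restrict_apply hmeas,
    ← Measure.map_apply hm (hE.inter measurableSet_Ioc), map_occI S hS hTop,
    Measure.restrict_apply (hE.inter measurableSet_Ioc)]
  congr 1
  ext z
  simp only [mem_inter_iff, mem_Ioc, mem_Ioi]
  tauto


lemma master (E S : Set ℝ) (hE : MeasurableSet E) (hS : MeasurableSet S)
    (hTop : volume (E ∩ S ∩ Set.Ioi 0) = ⊤) {t : ℝ} (ht : 0 ≤ t) :
    occI S (sInf {s : ℝ | 0 < s ∧ t < occ (occI S ⁻¹' E) s}) = occI (E ∩ S) t := by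
  have hTopS : volume (S ∩ Set.Ioi 0) = ⊤ := by
    rw [eq_top_iff, ← hTop]
    exact measure_mono (inter_subset_inter_left _ inter_subset_right)
  set μt := occI (E ∩ S) t with hμdef
  have hμ0 : 0 ≤ μt := occI_nonneg (E ∩ S) hTop t
  have hMμ : occ (E ∩ S) μt = t := occ_occI (E ∩ S) hTop ht
  have hstrict : ∀ (W : Set ℝ), MeasurableSet W → E ∩ S ⊆ W → ∀ {x : ℝ}, μt < x →
      occ W μt < occ W x := by
    intro W hW hsub x hx
    have h0x : 0 < x := lt_of_le_of_lt hμ0 hx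
    have h1 : t < occ (E ∩ S) x := (occI_lt_iff (E ∩ S) hTop ht h0x).1 hx
    have s1 := occ_split (E ∩ S) (hE.inter hS) hμ0 hx.le
    have s2 := occ_split W hW hμ0 hx.le
    have hmm : volume ((E ∩ S) ∩ Set.Ioc μt x) ≤ volume (W ∩ Set.Ioc μt x) :=
      measure_mono (inter_subset_inter_left _ hsub)
    have hneW : volume (W ∩ Set.Ioc μt x) ≠ ⊤ :=
      (lt_of_le_of_lt (measure_mono inter_subset_right) measure_Ioc_lt_top).ne
    have h2 := ENNReal.toReal_mono hneW hmm
    linarith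
  have hcomp : ∀ {s : ℝ}, 0 < s → occ (occI S ⁻¹' E) s = occ (E ∩ S) (occI S s) := by
    intro s hs
    rw [occ, occ, key E S hE hS hTopS hs]
  have hsetEq : {s : ℝ | 0 < s ∧ t < occ (occI S ⁻¹' E) s} = Set.Ioi (occ S μt) := by
    ext s
    simp only [mem_setOf_eq, mem_Ioi]
    constructor
    · rintro ⟨hs0, hts⟩
      rw [hcomp hs0] at hts
      have hβs : 0 < occI S s := lt_of_lt_of_le hs0 (le_occI S hTopS hs0.le)
      have h1 : μt < occI S s := (occI_lt_iff (E ∩ S) hTop ht hβs).2 hts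
      obtain ⟨x, hx1, hx2⟩ := exists_between h1
      have hxle : occ S x ≤ s := by
        by_contra hc
        push_neg at hc
        have := (occI_lt_iff S hTopS hs0.le (lt_of_le_of_lt hμ0 hx1)).2 hc
        linarith
      exact lt_of_lt_of_le (hstrict S hS inter_subset_right hx1) hxle
    · intro hlt
      have hs0 : 0 < s := lt_of_le_of_lt (occ_nonneg S μt) hlt
      refine ⟨hs0, ?_⟩
      rw [hcomp hs0]
      have h2 : μt < occI S s := by
        by_contra hc
        push_neg at hc
        have h3 := occ_mono S hc
        rw [occ_occI S hTopS hs0.le] at h3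
        linarith
      have hβs : 0 < occI S s := lt_of_le_of_lt hμ0 h2
      exact (occI_lt_iff (E ∩ S) hTop ht hβs).1 h2
  rw [hsetEq, csInf_Ioi]
  have hset2 : {x : ℝ | 0 < x ∧ occ S μt < occ S x} = Set.Ioi μt := by
    ext x
    simp only [mem_setOf_eq, mem_Ioi]
    constructor
    · rintro ⟨hx0, hx⟩
      by_contra hc
      push_neg at hc
      exact absurd hx (not_lt.2 (occ_mono S hc))
    · intro hx
      exact ⟨lt_of_le_of_lt hμ0 hx, hstrict S hS inter_subset_right hx⟩
  show sInf {x : ℝ | 0 < x ∧ occ S μt < occ S x} = μt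
  rw [hset2, csInf_Ioi]

lemma integral_eq (V : Set ℝ) (hV : MeasurableSet (V ∩ Set.Ioi 0)) {t : ℝ} (ht : 0 ≤ t) :
    (∫ z in (0:ℝ)..t, V.indicator (fun _ => (1:ℝ)) z) = occ V t := by
  rw [intervalIntegral.integral_of_le ht]
  have h1 : EqOn (V.indicator (fun _ => (1:ℝ)))
      ((V ∩ Set.Ioi 0).indicator (fun _ => (1:ℝ))) (Set.Ioc 0 t) := by
    intro z hz
    by_cases hzV : z ∈ V
    · have hm : z ∈ V ∩ Set.Ioi 0 := Set.mem_inter hzV hz.1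
      rw [indicator_of_mem hzV, indicator_of_mem hm]
    · have hm : z ∉ V ∩ Set.Ioi 0 := fun h => hzV h.1
      rw [indicator_of_notMem hzV, indicator_of_notMem hm]
  rw [setIntegral_congr_fun measurableSet_Ioc h1, setIntegral_indicator hV, setIntegral_const]
  have hset : Set.Ioc 0 t ∩ (V ∩ Set.Ioi 0) = V ∩ Set.Ioc 0 t := by
    ext z
    simp only [mem_inter_iff, mem_Ioc, mem_Ioi]
    tauto
  rw [hset, smul_eq_mul, mul_one, occ]
  rfl

lemma measurable_mod (f : ℝ → ℝ)
    (hf : ∀ t : ℝ, 0 ≤ t → Tendsto f (nhdsWithin t (Set.Ici t)) (nhds (f t))) :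
    Measurable (fun t : ℝ => if 0 ≤ t then f t else 0) := by
  have hq : ∀ n : ℕ, Measurable (fun t : ℝ =>
      if 0 ≤ t then f (((⌊t * 2^n⌋ : ℤ) + 1 : ℝ) / 2^n) else 0) := by
    intro n
    refine Measurable.ite measurableSet_Ici ?_ measurable_const
    have h1 : Measurable (fun t : ℝ => (⌊t * 2^n⌋ : ℤ)) :=
      Int.measurable_floor.comp (measurable_id.mul_const _)
    exact (measurable_of_countable (fun k : ℤ => f (((k : ℝ) + 1) / 2^n))).comp h1
  refine measurable_of_tendsto_metrizable hq (tendsto_pi_nhds.2 fun t => ?_)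
  by_cases ht : 0 ≤ t
  · simp only [if_pos ht]
    have hq1 : ∀ n : ℕ, t ≤ ((⌊t * 2^n⌋ : ℤ) + 1 : ℝ) / 2^n := by
      intro n
      rw [le_div_iff₀ (by positivity : (0:ℝ) < 2^n)]
      linarith [Int.lt_floor_add_one (t * 2^n)]
    have hq2 : ∀ n : ℕ, ((⌊t * 2^n⌋ : ℤ) + 1 : ℝ) / 2^n ≤ t + ((2:ℝ)⁻¹)^n := by
      intro n
      rw [div_le_iff₀ (by positivity : (0:ℝ) < 2^n)]
      have h2 : (t + ((2:ℝ)⁻¹)^n) * 2^n = t * 2^n + 1 := by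
        rw [add_mul, ← mul_pow]
        norm_num
      rw [h2]
      linarith [Int.floor_le (t * 2^n)]
    have hupper : Tendsto (fun n : ℕ => t + ((2:ℝ)⁻¹)^n) atTop (nhds t) := by
      have := tendsto_pow_atTop_nhds_zero_of_lt_one (by norm_num : (0:ℝ) ≤ 2⁻¹)
        (by norm_num : (2:ℝ)⁻¹ < 1)
      simpa using tendsto_const_nhds.add this
    have hlim : Tendsto (fun n : ℕ => ((⌊t * 2^n⌋ : ℤ) + 1 : ℝ) / 2^n) atTop (nhds t) :=
      tendsto_of_tendsto_of_tendsto_of_le_of_le tendsto_const_nhds hupper hq1 hq2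
    exact (hf t ht).comp (tendsto_nhdsWithin_of_tendsto_nhds_of_eventually_within _ hlim
      (Eventually.of_forall fun n => hq1 n))
  · simp only [if_neg ht]
    exact tendsto_const_nhds

end FF


/-- Proposition 3.16 / `prop:FF_repr_ab`. On `D_{a,b}([0,∞),ℝ)` the
fast-forwarding maps commute, `N_a^l(N_b^r(f)) = N_b^r(N_a^l(f))`, and both compositions
equal `f ∘ (A^f_{(a,b)})^{−1}`. -/
theorem ffLeft_ffRight_comm (a b : ℝ) (hab : a < b) (f : ℝ → ℝ) (hf : IsCadlag f)
    (hfD : InfBetween a b f) :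
    ∀ t : ℝ, 0 ≤ t →
      ffLeft a (ffRight b f) t = ffRight b (ffLeft a f) t ∧
      ffLeft a (ffRight b f) t = f (occMidInv a b f t) := by
  intro t ht
  classical
  obtain ⟨f', hf'm, hf'eq⟩ : ∃ f' : ℝ → ℝ, Measurable f' ∧ ∀ z, 0 ≤ z → f' z = f z :=
    ⟨fun z => if 0 ≤ z then f z else 0, FF.measurable_mod f hf.1, fun z hz => if_pos hz⟩
  set E : Set ℝ := {z | a < f' z} with hEdef
  set S : Set ℝ := {z | f' z < b} with hSdef
  have hE : MeasurableSet E := measurableSet_lt measurable_const hf'm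
  have hS : MeasurableSet S := measurableSet_lt hf'm measurable_const
  have hTopES : volume (E ∩ S ∩ Ioi 0) = ⊤ := by
    rw [eq_top_iff]
    have hsub : {z : ℝ | 0 ≤ z ∧ f z ∈ Ioo a b} ⊆ (E ∩ S ∩ Ioi 0) ∪ {0} := by
      rintro z ⟨hz0, hz1, hz2⟩
      rcases eq_or_lt_of_le hz0 with h | h
      · exact Or.inr (by rw [← h]; exact rfl)
      · refine Or.inl ⟨⟨?_, ?_⟩, h⟩
        · show a < f' z
          rw [hf'eq z hz0]; exact hz1
        · show f' z < b
          rw [hf'eq z hz0]; exact hz2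
    calc ⊤ = volume {z : ℝ | 0 ≤ z ∧ f z ∈ Ioo a b} := hfD.symm
      _ ≤ volume ((E ∩ S ∩ Ioi 0) ∪ {0}) := measure_mono hsub
      _ ≤ volume (E ∩ S ∩ Ioi 0) + volume ({0} : Set ℝ) := measure_union_le _ _
      _ = volume (E ∩ S ∩ Ioi 0) := by rw [Real.volume_singleton, add_zero]
  have hTopS : volume (S ∩ Ioi 0) = ⊤ := by
    rw [eq_top_iff, ← hTopES]
    exact measure_mono (inter_subset_inter_left _ inter_subset_right)
  have hTopE : volume (E ∩ Ioi 0) = ⊤ := by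
    rw [eq_top_iff, ← hTopES]
    exact measure_mono (inter_subset_inter_left _ inter_subset_left)
  have hconv : ∀ (V W : Set ℝ), MeasurableSet W → (V ∩ Ioi 0 = W ∩ Ioi 0) →
      ∀ {s : ℝ}, 0 ≤ s →
      (∫ z in (0:ℝ)..s, V.indicator (fun _ => (1:ℝ)) z) = FF.occ W s := by
    intro V W hW hVW s hs
    rw [FF.integral_eq V (by rw [hVW]; exact hW.inter measurableSet_Ioi) hs]
    unfold FF.occ
    congr 2
    ext z
    have hiff := Set.ext_iff.1 hVW z
    simp only [Set.mem_inter_iff, Set.mem_Ioi] at hiff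
    simp only [Set.mem_inter_iff, Set.mem_Ioc]
    constructor
    · rintro ⟨h1, h2⟩
      exact ⟨(hiff.1 ⟨h1, h2.1⟩).1, h2⟩
    · rintro ⟨h1, h2⟩
      exact ⟨(hiff.2 ⟨h1, h2.1⟩).1, h2⟩
  have hSset : {z : ℝ | f z < b} ∩ Ioi 0 = S ∩ Ioi 0 := by
    ext z
    simp only [Set.mem_inter_iff, Set.mem_setOf_eq, Set.mem_Ioi]
    exact and_congr_left fun hz => by
      rw [show z ∈ S ↔ f' z < b from Iff.rfl, hf'eq z hz.le]
  have hEset : {z : ℝ | a < f z} ∩ Ioi 0 = E ∩ Ioi 0 := by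
    ext z
    simp only [Set.mem_inter_iff, Set.mem_setOf_eq, Set.mem_Ioi]
    exact and_congr_left fun hz => by
      rw [show z ∈ E ↔ a < f' z from Iff.rfl, hf'eq z hz.le]
  have hMset : {z : ℝ | f z ∈ Ioo a b} ∩ Ioi 0 = (E ∩ S) ∩ Ioi 0 := by
    ext z
    simp only [Set.mem_inter_iff, Set.mem_setOf_eq, Set.mem_Ioi, Set.mem_Ioo]
    exact and_congr_left fun hz => by
      rw [show z ∈ E ↔ a < f' z from Iff.rfl, show z ∈ S ↔ f' z < b from Iff.rfl,
        hf'eq z hz.le]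
  have hlow : ∀ {s : ℝ}, 0 < s → occLower b f s = FF.occ S s := by
    intro s hs
    exact hconv {z : ℝ | f z < b} S hS hSset hs.le
  have hβeq : occLowerInv b f = FF.occI S := by
    funext x
    show sInf _ = sInf _
    congr 1
    ext s
    simp only [Set.mem_setOf_eq]
    exact and_congr_right fun hs => by rw [hlow hs]
  have hupp : ∀ {s : ℝ}, 0 < s → occUpper a f s = FF.occ E s := by
    intro s hs
    exact hconv {z : ℝ | a < f z} E hE hEset hs.le
  have hαeq : occUpperInv a f = FF.occI E := by
    funext x
    show sInf _ = sInf _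
    congr 1
    ext s
    simp only [Set.mem_setOf_eq]
    exact and_congr_right fun hs => by rw [hupp hs]
  have hmid : ∀ {s : ℝ}, 0 < s → occMid a b f s = FF.occ (E ∩ S) s := by
    intro s hs
    exact hconv {z : ℝ | f z ∈ Ioo a b} (E ∩ S) (hE.inter hS) hMset hs.le
  have hmidInv : occMidInv a b f t = FF.occI (E ∩ S) t := by
    show sInf _ = sInf _
    congr 1
    ext s
    simp only [Set.mem_setOf_eq]
    exact and_congr_right fun hs => by rw [hmid hs]
  have hL : ffLeft a (ffRight b f) t = f (FF.occI (E ∩ S) t) := by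
    have hgup : ∀ {s : ℝ}, 0 < s → occUpper a (ffRight b f) s
        = FF.occ (FF.occI S ⁻¹' E) s := by
      intro s hs
      refine hconv {z : ℝ | a < ffRight b f z} (FF.occI S ⁻¹' E)
        ((FF.occI_measurable S hTopS) hE) ?_ hs.le
      ext z
      simp only [Set.mem_inter_iff, Set.mem_setOf_eq, Set.mem_Ioi, Set.mem_preimage]
      refine and_congr_left fun hz => ?_
      have h1 : ffRight b f z = f (FF.occI S z) := by
        show f (occLowerInv b f z) = _
        rw [hβeq]
      have h2 : 0 < FF.occI S z := lt_of_lt_of_le hz (FF.le_occI S hTopS hz.le)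
      rw [h1, ← hf'eq _ h2.le]
      exact Iff.rfl
    have hτ : occUpperInv a (ffRight b f) t
        = sInf {s : ℝ | 0 < s ∧ t < FF.occ (FF.occI S ⁻¹' E) s} := by
      show sInf _ = sInf _
      congr 1
      ext s
      simp only [Set.mem_setOf_eq]
      exact and_congr_right fun hs => by rw [hgup hs]
    show f (occLowerInv b f (occUpperInv a (ffRight b f) t)) = _
    rw [hτ, hβeq]
    exact congrArg f (FF.master E S hE hS hTopES ht)
  have hR : ffRight b (ffLeft a f) t = f (FF.occI (E ∩ S) t) := by
    have hglow : ∀ {s : ℝ}, 0 < s → occLower b (ffLeft a f) s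
        = FF.occ (FF.occI E ⁻¹' S) s := by
      intro s hs
      refine hconv {z : ℝ | ffLeft a f z < b} (FF.occI E ⁻¹' S)
        ((FF.occI_measurable E hTopE) hS) ?_ hs.le
      ext z
      simp only [Set.mem_inter_iff, Set.mem_setOf_eq, Set.mem_Ioi, Set.mem_preimage]
      refine and_congr_left fun hz => ?_
      have h1 : ffLeft a f z = f (FF.occI E z) := by
        show f (occUpperInv a f z) = _
        rw [hαeq]
      have h2 : 0 < FF.occI E z := lt_of_lt_of_le hz (FF.le_occI E hTopE hz.le)
      rw [h1, ← hf'eq _ h2.le]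
      exact Iff.rfl
    have hτ : occLowerInv b (ffLeft a f) t
        = sInf {s : ℝ | 0 < s ∧ t < FF.occ (FF.occI E ⁻¹' S) s} := by
      show sInf _ = sInf _
      congr 1
      ext s
      simp only [Set.mem_setOf_eq]
      exact and_congr_right fun hs => by rw [hglow hs]
    show f (occUpperInv a f (occLowerInv b (ffLeft a f) t)) = _
    rw [hτ, hαeq]
    have hm := FF.master S E hS hE (by rwa [Set.inter_comm S E]) ht
    rw [hm, Set.inter_comm S E]
  exact ⟨hL.trans hR.symm, hL.trans (congrArg f hmidInv.symm)⟩
end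
end

section
/- Let f ∈ D([0,∞),ℝ) satisfy f(0) < 1, and set τ = inf{t>0 : f(t) ≥ 1} (with inf ∅ = ∞). Assume that for each δ>0 one has sup_{0 ≤ t < τ−δ} f(t) < 1, and that if τ < ∞ then f(τ) > 1. Then f is a point of continuity of the right killing map D^r : D([0,∞),ℝ) → D([0,∞),ℝ) defined by D^r(f)(t) = f(t) for t < τ and D^r(f)(t) = 1 for t ≥ τ, with respect to the Skorokhod J1 topology. -/
open MeasureTheory Set Filter Topology

noncomputable section

/-- A Skorokhod time change on `[0,T]`: a strictly increasing continuous bijection of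
`[0,T]` onto itself. -/
def IsTimeChange (T : ℝ) (γ : ℝ → ℝ) : Prop :=
  ContinuousOn γ (Icc 0 T) ∧ StrictMonoOn γ (Icc 0 T) ∧ γ 0 = 0 ∧ γ T = T

/-- The Skorokhod `J1` metric on `D([0,T],ℝ)`:
`d_{J1,T}(f,g) = inf_γ max( sup_{t∈[0,T]} |γ(t)−t| , sup_{t∈[0,T]} |f(γ(t))−g(t)| )`. -/
noncomputable def dJ1T (T : ℝ) (f g : ℝ → ℝ) : ℝ :=
  sInf {r : ℝ | 0 ≤ r ∧ ∃ γ : ℝ → ℝ, IsTimeChange T γ ∧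
    (∀ t ∈ Icc (0:ℝ) T, |γ t - t| ≤ r) ∧ (∀ t ∈ Icc (0:ℝ) T, |f (γ t) - g t| ≤ r)}

/-- The smoothed restriction `f|_m` of `f` to `[0,m]`. -/
noncomputable def restrictD (m : ℝ) (f : ℝ → ℝ) : ℝ → ℝ :=
  fun t => if t ≤ m - 1 then f t else (m - t) * f t

/-- The Skorokhod `J1` metric on `D([0,∞),ℝ)`:
`d_{J1}(f,g) = Σ_{m=1}^∞ 2^{−m} (1 ∧ d_{J1,m}(f|_m, g|_m))`. -/
noncomputable def dJ1 (f g : ℝ → ℝ) : ℝ :=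
  ∑' m : ℕ, (2:ℝ)⁻¹ ^ (m + 1) *
    min 1 (dJ1T ((m:ℝ) + 1) (restrictD ((m:ℝ) + 1) f) (restrictD ((m:ℝ) + 1) g))

/-- `τ = inf{t > 0 : f(t) ≥ c}` as an extended real (`inf ∅ = ∞`). -/
noncomputable def tauGe (c : ℝ) (f : ℝ → ℝ) : EReal :=
  sInf {x : EReal | ∃ t : ℝ, 0 < t ∧ c ≤ f t ∧ x = (t : EReal)}

/-- The right killing map `D^r`: the path is followed until
`τ = inf{t>0 : f(t) ≥ 1}` and absorbed at `1` afterwards. -/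
noncomputable def killRightD (f : ℝ → ℝ) : ℝ → ℝ :=
  fun t => if (t : EReal) < tauGe 1 f then f t else 1

/-! ### Auxiliary lemmas -/

lemma IsCadlag.bounded {f : ℝ → ℝ} (hf : IsCadlag f) (M : ℝ) :
    ∃ B : ℝ, 0 ≤ B ∧ ∀ t ∈ Icc (0:ℝ) M, |f t| ≤ B := by
  have hK : IsCompact (Icc (0:ℝ) M) := isCompact_Icc
  have key : ∃ B : ℝ, ∀ t ∈ Icc (0:ℝ) M, |f t| ≤ B := by
    refine hK.induction_on (p := fun S => ∃ B : ℝ, ∀ t ∈ S, |f t| ≤ B) ⟨0, by simp⟩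
      (fun s t hst ⟨B, hB⟩ => ⟨B, fun x hx => hB x (hst hx)⟩) ?_ ?_
    · rintro s t ⟨B1, h1⟩ ⟨B2, h2⟩
      refine ⟨max B1 B2, ?_⟩
      rintro x (hx | hx)
      exacts [(h1 x hx).trans (le_max_left _ _), (h2 x hx).trans (le_max_right _ _)]
    · intro x hx
      have hx0 : (0:ℝ) ≤ x := hx.1
      have hr : f ⁻¹' (Ioo (f x - 1) (f x + 1)) ∈ 𝓝[≥] x :=
        hf.1 x hx0 (Ioo_mem_nhds (by linarith) (by linarith))
      rw [mem_nhdsGE_iff_exists_Ico_subset] at hr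
      obtain ⟨u, hu, husub⟩ := hr
      rcases eq_or_lt_of_le hx0 with hx0' | hx0'
      · refine ⟨Icc 0 M ∩ Iio u, inter_mem_nhdsWithin _ (Iio_mem_nhds hu), |f x| + 1, ?_⟩
        rintro t ⟨⟨ht0, _⟩, htu⟩
        have : t ∈ Ico x u := ⟨hx0' ▸ ht0, htu⟩
        have h2 := husub this
        rw [abs_le]
        constructor
        · have := neg_abs_le (f x); linarith [h2.1]
        · have := le_abs_self (f x); linarith [h2.2]
      · obtain ⟨L, hL⟩ := hf.2 x hx0'
        have hl : f ⁻¹' (Ioo (L - 1) (L + 1)) ∈ 𝓝[<] x :=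
          hL (Ioo_mem_nhds (by linarith) (by linarith))
        rw [mem_nhdsLT_iff_exists_Ioo_subset] at hl
        obtain ⟨l, hlx, hlsub⟩ := hl
        refine ⟨Icc 0 M ∩ Ioo l u, inter_mem_nhdsWithin _
          (Ioo_mem_nhds hlx hu), max (|f x| + 1) (|L| + 1), ?_⟩
        rintro t ⟨_, htl, htu⟩
        rcases lt_or_ge t x with htx | htx
        · have h2 := hlsub ⟨htl, htx⟩
          refine le_trans ?_ (le_max_right _ _)
          rw [abs_le]
          constructor
          · have := neg_abs_le L; linarith [h2.1]
          · have := le_abs_self L; linarith [h2.2]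
        · have h2 := husub ⟨htx, htu⟩
          refine le_trans ?_ (le_max_left _ _)
          rw [abs_le]
          constructor
          · have := neg_abs_le (f x); linarith [h2.1]
          · have := le_abs_self (f x); linarith [h2.2]
  obtain ⟨B, hB⟩ := key
  exact ⟨max B 0, le_max_right _ _, fun t ht => (hB t ht).trans (le_max_left _ _)⟩

lemma dJ1T_nonneg (T : ℝ) (f g : ℝ → ℝ) : 0 ≤ dJ1T T f g :=
  Real.sInf_nonneg fun r hr => hr.1

lemma timeChange_mem {T : ℝ} {γ : ℝ → ℝ} (h : IsTimeChange T γ) {t : ℝ}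
    (ht : t ∈ Icc (0:ℝ) T) : γ t ∈ Icc (0:ℝ) T := by
  obtain ⟨_, hm, h0, hT⟩ := h
  have h0T : (0:ℝ) ≤ T := ht.1.trans ht.2
  constructor
  · have := hm.monotoneOn (left_mem_Icc.2 h0T) ht ht.1
    simpa [h0] using this
  · have := hm.monotoneOn ht (right_mem_Icc.2 h0T) ht.2
    simpa [hT] using this

lemma restrictD_eq {T : ℝ} (h : ℝ → ℝ) {u : ℝ} (hu : u ∈ Icc (0:ℝ) T) :
    restrictD T h u = min 1 (T - u) * h u := by
  unfold restrictD
  rcases le_or_gt u (T - 1) with hle | hlt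
  · rw [if_pos hle, min_eq_left (by linarith [hu.2] : (1:ℝ) ≤ T - u), one_mul]
  · rw [if_neg (not_le.2 hlt), min_eq_right (by linarith)]

lemma abs_min_sub_min (c x y : ℝ) : |min c x - min c y| ≤ |x - y| := by
  have h2 := min_le_right c x
  have h4 := min_le_right c y
  rw [abs_sub_le_iff]
  constructor
  · rcases le_total c y with h | h
    · rw [min_eq_left h]
      have h5 := min_le_left c x
      calc min c x - c ≤ 0 := by linarith
        _ ≤ |x - y| := abs_nonneg _
    · rw [min_eq_right h]
      calc min c x - y ≤ x - y := by linarith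
        _ ≤ |x - y| := le_abs_self _
  · rcases le_total c x with h | h
    · rw [min_eq_left h]
      have h5 := min_le_left c y
      calc min c y - c ≤ 0 := by linarith
        _ ≤ |x - y| := abs_nonneg _
    · rw [min_eq_right h]
      calc min c y - x ≤ y - x := by linarith
        _ ≤ |x - y| := by rw [abs_sub_comm]; exact le_abs_self _

lemma continuousOn_union_closed {f : ℝ → ℝ} {s t : Set ℝ} (hs : IsClosed s) (ht : IsClosed t)
    (hfs : ContinuousOn f s) (hft : ContinuousOn f t) : ContinuousOn f (s ∪ t) := by
  intro x hx
  apply continuousWithinAt_union.2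
  constructor
  · by_cases h : x ∈ s
    · exact hfs x h
    · exact continuousWithinAt_of_notMem_closure (by rwa [hs.closure_eq])
  · by_cases h : x ∈ t
    · exact hft x h
    · exact continuousWithinAt_of_notMem_closure (by rwa [ht.closure_eq])

theorem test_transfer {T M η d e B : ℝ} {F G γ : ℝ → ℝ}
    (hT : 1 ≤ T) (hM : T + 1 ≤ M)
    (hγ : IsTimeChange M γ)
    (hη : 0 < η) (hη2 : η ≤ 1/2) (hd : 0 < d) (hdη : d < η)
    (ha : ∀ t ∈ Icc (0:ℝ) T, |γ t - t| ≤ d)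
    (hb : ∀ t ∈ Icc (0:ℝ) T, |F (γ t) - G t| ≤ e)
    (he : 0 ≤ e)
    (hF : ∀ u ∈ Icc (0:ℝ) T, |F u| ≤ B) (hG : ∀ t ∈ Icc (0:ℝ) T, |G t| ≤ B)
    (hB : 0 ≤ B) :
    dJ1T T (restrictD T F) (restrictD T G) ≤ (η + d) * (2*B + 1) + e := by
  have habs : ∀ a b : ℝ, |a - b| ≤ |a| + |b| := fun a b => by
    simpa [sub_eq_add_neg] using abs_add_le a (-b)
  have hTM : T ≤ M := by linarith
  have hsub : Icc (0:ℝ) T ⊆ Icc (0:ℝ) M := Icc_subset_Icc_right hTM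
  set p : ℝ := T - η with hp
  have hp1 : (1:ℝ)/2 ≤ p := by rw [hp]; linarith
  have hp0 : (0:ℝ) ≤ p := by linarith
  have hpT : p < T := by rw [hp]; linarith
  have hpmem : p ∈ Icc (0:ℝ) T := ⟨hp0, hpT.le⟩
  set q : ℝ := γ p with hqdef
  have hq : |q - p| ≤ d := ha p hpmem
  have hq' := abs_le.1 hq
  have hqT : q < T := by linarith [hq'.2]
  have hq0 : 0 ≤ q := (timeChange_mem hγ (hsub hpmem)).1
  set sl : ℝ := (T - q)/η with hsl
  have hslpos : 0 < sl := div_pos (by linarith) hη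
  set γh : ℝ → ℝ := fun t => if t ≤ p then γ t else q + (t - p) * sl with hγh
  have hγhle : ∀ t, t ≤ p → γh t = γ t := by
    intro t htp; rw [hγh]; simp only [if_pos htp]
  have hγhgt : ∀ t, p < t → γh t = q + (t - p) * sl := by
    intro t htp; rw [hγh]; simp only [if_neg (not_le.2 htp)]
  have hγh0 : γh 0 = 0 := by rw [hγhle 0 hp0]; exact hγ.2.2.1
  have hγhT : γh T = T := by
    rw [hγhgt T hpT, hsl, hp]
    field_simp
    ring
  have hγhp : γh p = q := by rw [hγhle p le_rfl]
  have hmono : StrictMonoOn γh (Icc 0 T) := by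
    intro x hx y hy hxy
    by_cases hxp : x ≤ p
    · by_cases hyp : y ≤ p
      · rw [hγhle x hxp, hγhle y hyp]
        exact hγ.2.1 (hsub hx) (hsub hy) hxy
      · push_neg at hyp
        rw [hγhle x hxp, hγhgt y hyp]
        have h1 : γ x ≤ q := by
          rw [hqdef]
          exact hγ.2.1.monotoneOn (hsub hx) (hsub hpmem) hxp
        have h2 : 0 < (y - p) * sl := mul_pos (by linarith) hslpos
        linarith
    · push_neg at hxp
      have hyp : p < y := by linarith
      rw [hγhgt x hxp, hγhgt y hyp]
      have : (x - p) * sl < (y - p) * sl := by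
        apply mul_lt_mul_of_pos_right _ hslpos
        linarith
      linarith
  have hcont : ContinuousOn γh (Icc 0 T) := by
    have hsplit : Icc (0:ℝ) T = Icc 0 p ∪ Icc p T := (Icc_union_Icc_eq_Icc hp0 hpT.le).symm
    rw [hsplit]
    apply continuousOn_union_closed isClosed_Icc isClosed_Icc
    · apply ContinuousOn.congr ((hγ.1).mono (Icc_subset_Icc_right (by linarith)))
      intro x hx
      exact hγhle x hx.2
    · have hlin : ContinuousOn (fun t : ℝ => q + (t - p) * sl) (Icc p T) :=
        (continuous_const.add ((continuous_id.sub continuous_const).mul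
          continuous_const)).continuousOn
      apply ContinuousOn.congr hlin
      intro x hx
      rcases eq_or_lt_of_le hx.1 with hxp | hxp
      · rw [← hxp, hγhp]; simp
      · exact hγhgt x hxp
  have htc : IsTimeChange T γh := ⟨hcont, hmono, hγh0, hγhT⟩
  have hrange : ∀ t ∈ Icc (0:ℝ) T, γh t ∈ Icc (0:ℝ) T := fun t ht => timeChange_mem htc ht
  have htail : ∀ t ∈ Icc (0:ℝ) T, p < t → q ≤ γh t ∧ γh t ≤ T := by
    intro t ht hpt
    constructor
    · rw [hγhgt t hpt]
      nlinarith [mul_nonneg (le_of_lt (sub_pos.2 hpt)) hslpos.le]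
    · exact (hrange t ht).2
  have htime : ∀ t ∈ Icc (0:ℝ) T, |γh t - t| ≤ η + d := by
    intro t ht
    by_cases htp : t ≤ p
    · rw [hγhle t htp]
      exact (ha t ht).trans (by linarith)
    · push_neg at htp
      obtain ⟨h1, h2⟩ := htail t ht htp
      rw [abs_le]
      refine ⟨?_, ?_⟩
      · have h3 : t ≤ T := ht.2
        have h4 : p - d ≤ q := by linarith [hq'.1]
        rw [hp] at h4
        linarith
      · rw [hp] at htp
        linarith
  have hr0 : (0:ℝ) ≤ (η + d) * (2*B + 1) + e := by positivity
  have hval : ∀ t ∈ Icc (0:ℝ) T,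
      |restrictD T F (γh t) - restrictD T G t| ≤ (η + d) * (2*B + 1) + e := by
    intro t ht
    have hγht := hrange t ht
    rw [restrictD_eq F hγht, restrictD_eq G ht]
    have hσa0 : 0 ≤ min 1 (T - γh t) := le_min zero_le_one (by linarith [hγht.2])
    have hσa1 : min 1 (T - γh t) ≤ 1 := min_le_left _ _
    have hσb0 : 0 ≤ min 1 (T - t) := le_min zero_le_one (by linarith [ht.2])
    have hσb1 : min 1 (T - t) ≤ 1 := min_le_left _ _
    have hFb : |F (γh t)| ≤ B := hF _ hγht
    have hGb : |G t| ≤ B := hG _ ht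
    by_cases htp : t ≤ p
    · have hγeq : γh t = γ t := hγhle t htp
      rw [hγeq]
      have hγt : γ t ∈ Icc (0:ℝ) T := hγeq ▸ hγht
      have hσa0' : 0 ≤ min 1 (T - γ t) := le_min zero_le_one (by linarith [hγt.2])
      have hFb' : |F (γ t)| ≤ B := hF _ hγt
      have hσ : |min 1 (T - γ t) - min 1 (T - t)| ≤ d := by
        have h1 := abs_min_sub_min 1 (T - γ t) (T - t)
        have h2 : |(T - γ t) - (T - t)| = |γ t - t| := by
          rw [show (T - γ t) - (T - t) = -(γ t - t) by ring, abs_neg]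
        rw [h2] at h1
        exact h1.trans (ha t ht)
      have heq : min 1 (T - γ t) * F (γ t) - min 1 (T - t) * G t
          = min 1 (T - γ t) * (F (γ t) - G t)
            + (min 1 (T - γ t) - min 1 (T - t)) * G t := by ring
      rw [heq]
      calc |min 1 (T - γ t) * (F (γ t) - G t) + (min 1 (T - γ t) - min 1 (T - t)) * G t|
          ≤ |min 1 (T - γ t) * (F (γ t) - G t)|
            + |(min 1 (T - γ t) - min 1 (T - t)) * G t| := abs_add_le _ _
        _ = |min 1 (T - γ t)| * |F (γ t) - G t|
            + |min 1 (T - γ t) - min 1 (T - t)| * |G t| := by rw [abs_mul, abs_mul]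
        _ ≤ 1 * e + d * B := by
            apply add_le_add
            · exact mul_le_mul (by rw [abs_of_nonneg hσa0']; exact min_le_left _ _)
                (hb t ht) (abs_nonneg _) zero_le_one
            · exact mul_le_mul hσ hGb (abs_nonneg _) hd.le
        _ ≤ (η + d) * (2*B + 1) + e := by nlinarith [mul_nonneg hd.le hB, mul_nonneg hη.le hB, he, hd.le, hη.le]
    · push_neg at htp
      obtain ⟨h1, h2⟩ := htail t ht htp
      have hσa' : min 1 (T - γh t) ≤ η + d := by
        apply (min_le_right _ _).trans
        have h4 : p - d ≤ q := by linarith [hq'.1]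
        rw [hp] at h4
        linarith
      have hσb' : min 1 (T - t) ≤ η := by
        apply (min_le_right _ _).trans
        rw [hp] at htp; linarith
      calc |min 1 (T - γh t) * F (γh t) - min 1 (T - t) * G t|
          ≤ |min 1 (T - γh t) * F (γh t)| + |min 1 (T - t) * G t| := habs _ _
        _ = |min 1 (T - γh t)| * |F (γh t)| + |min 1 (T - t)| * |G t| := by
            rw [abs_mul, abs_mul]
        _ ≤ (η + d) * B + η * B := by
            apply add_le_add
            · exact mul_le_mul (by rwa [abs_of_nonneg hσa0]) hFb (abs_nonneg _) (by linarith)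
            · exact mul_le_mul (by rwa [abs_of_nonneg hσb0]) hGb (abs_nonneg _) (by linarith)
        _ ≤ (η + d) * (2*B + 1) + e := by
            have hx : 0 ≤ d * B := mul_nonneg hd.le hB
            have hy : 0 ≤ η * B := mul_nonneg hη.le hB
            have hz : (η + d) * (2*B + 1) + e = η * B + d * B + (η * B + d * B) + η + d + e := by
              ring
            have hw : (η + d) * B + η * B = η * B + d * B + η * B := by ring
            rw [hz, hw]
            linarith
  have hfin : η + d ≤ (η + d) * (2*B + 1) + e := by nlinarith [mul_nonneg hd.le hB, mul_nonneg hη.le hB, he, hd.le, hη.le]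
  have hmem : ((η + d) * (2*B + 1) + e) ∈ {r : ℝ | 0 ≤ r ∧ ∃ γ : ℝ → ℝ, IsTimeChange T γ ∧
      (∀ t ∈ Icc (0:ℝ) T, |γ t - t| ≤ r) ∧
      (∀ t ∈ Icc (0:ℝ) T, |restrictD T F (γ t) - restrictD T G t| ≤ r)} :=
    ⟨hr0, γh, htc, fun t ht => (htime t ht).trans hfin, hval⟩
  exact csInf_le ⟨0, fun x hx => hx.1⟩ hmem

lemma tauGe_nonneg (c : ℝ) (g : ℝ → ℝ) : (0:EReal) ≤ tauGe c g := by
  apply le_sInf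
  rintro x ⟨t, ht0, _, rfl⟩
  exact_mod_cast ht0.le

lemma tauGe_le {c : ℝ} {g : ℝ → ℝ} {t : ℝ} (ht : 0 < t) (hgt : c ≤ g t) :
    tauGe c g ≤ (t:EReal) := by
  unfold tauGe
  exact sInf_le ⟨t, ht, hgt, rfl⟩

lemma le_tauGe {c : ℝ} {g : ℝ → ℝ} {b : EReal}
    (h : ∀ t : ℝ, 0 < t → c ≤ g t → b ≤ (t:EReal)) : b ≤ tauGe c g := by
  apply le_sInf
  rintro x ⟨t, ht0, hgt, rfl⟩
  exact h t ht0 hgt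

lemma killRightD_eq_real {g : ℝ → ℝ} {r : ℝ} (hr : tauGe 1 g = (r:EReal)) (t : ℝ) :
    killRightD g t = if t < r then g t else 1 := by
  unfold killRightD
  rw [hr]
  by_cases h : t < r
  · rw [if_pos (by exact_mod_cast h), if_pos h]
  · rw [if_neg (by exact_mod_cast h), if_neg h]

lemma one_le_at_tau {g : ℝ → ℝ} (hg : IsCadlag g) {r : ℝ} (hr0 : 0 ≤ r)
    (hr : tauGe 1 g = (r : EReal)) : 1 ≤ g r := by
  have hfreq : ∃ᶠ t in 𝓝[≥] r, g t ∈ Ici (1:ℝ) := by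
    rw [frequently_iff]
    intro U hU
    rw [mem_nhdsGE_iff_exists_Ico_subset] at hU
    obtain ⟨u, hu, hsub⟩ := hU
    have h1 : tauGe 1 g < (u : EReal) := by
      rw [hr]; exact_mod_cast hu
    unfold tauGe at h1
    rw [sInf_lt_iff] at h1
    obtain ⟨x, hxS, hxu⟩ := h1
    obtain ⟨t, ht0, hgt, rfl⟩ := hxS
    have htu : t < u := by exact_mod_cast hxu
    have hrt : r ≤ t := by
      have h2 : tauGe 1 g ≤ (t:EReal) := tauGe_le ht0 hgt
      rw [hr] at h2
      exact_mod_cast h2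
    exact ⟨t, hsub ⟨hrt, htu⟩, hgt⟩
  exact isClosed_Ici.mem_of_frequently_of_tendsto hfreq (hg.1 r hr0)

lemma unscale {T d : ℝ} {f g γ : ℝ → ℝ} (hT : 1 ≤ T) (hd1 : d ≤ 1)
    (htime : ∀ t ∈ Icc (0:ℝ) (T+4), |γ t - t| ≤ d)
    (hval : ∀ t ∈ Icc (0:ℝ) (T+4), |restrictD (T+4) f (γ t) - restrictD (T+4) g t| ≤ d) :
    ∀ t ∈ Icc (0:ℝ) (T+2), |f (γ t) - g t| ≤ d := by
  intro t ht
  have ht4 : t ∈ Icc (0:ℝ) (T+4) := ⟨ht.1, by linarith [ht.2]⟩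
  have h2 := abs_le.1 (htime t ht4)
  have hγt : γ t ≤ T + 3 := by linarith [ht.2, h2.2]
  have e1 : restrictD (T+4) f (γ t) = f (γ t) := by
    unfold restrictD; rw [if_pos (by linarith : γ t ≤ T + 4 - 1)]
  have e2 : restrictD (T+4) g t = g t := by
    unfold restrictD; rw [if_pos (by linarith [ht.2] : t ≤ T + 4 - 1)]
  have h3 := hval t ht4
  rwa [e1, e2] at h3

lemma window (f : ℝ → ℝ) (hf : IsCadlag f) (h0 : f 0 < 1)
    (hsup : ∀ δ : ℝ, 0 < δ → ∃ c : ℝ, c < 1 ∧ ∀ t : ℝ, 0 ≤ t →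
      ((t + δ : ℝ) : EReal) < tauGe 1 f → f t ≤ c)
    (hjump : ∀ s : ℝ, tauGe 1 f = (s : EReal) → 1 < f s)
    (T : ℝ) (hT : 1 ≤ T) (ε' : ℝ) (hε' : 0 < ε') :
    ∃ δ' : ℝ, 0 < δ' ∧ ∀ g : ℝ → ℝ, IsCadlag g → ∀ γ : ℝ → ℝ, ∀ d : ℝ, 0 < d → d ≤ δ' →
      IsTimeChange (T+4) γ →
      (∀ t ∈ Icc (0:ℝ) (T+4), |γ t - t| ≤ d) →
      (∀ t ∈ Icc (0:ℝ) (T+4), |restrictD (T+4) f (γ t) - restrictD (T+4) g t| ≤ d) →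
      dJ1T T (restrictD T (killRightD f)) (restrictD T (killRightD g)) < ε' := by
  obtain ⟨B₀, hB₀0, hB₀⟩ := hf.bounded (T+4)
  obtain ⟨B, hB1, hB0, hBB₀⟩ : ∃ B : ℝ, 1 ≤ B ∧ 0 ≤ B ∧ B₀ + 1 ≤ B :=
    ⟨B₀ + 1, by linarith, by linarith, le_rfl⟩
  by_cases hcase : ∃ s : ℝ, tauGe 1 f = (s:EReal) ∧ s ≤ T + 3/2
  · -- CASE (ii): the crossing time is inside / near the window
    obtain ⟨s, hτs, hsT⟩ := hcase
    -- s > 0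
    have hev0 : f ⁻¹' (Iio 1) ∈ 𝓝[≥] (0:ℝ) := hf.1 0 le_rfl (Iio_mem_nhds h0)
    rw [mem_nhdsGE_iff_exists_Ico_subset] at hev0
    obtain ⟨w, hw, hwsub⟩ := hev0
    have hs0 : 0 < s := by
      have hws : (w : EReal) ≤ tauGe 1 f := by
        apply le_tauGe
        intro t ht0 hft
        by_contra hc
        push_neg at hc
        have htw : t < w := by exact_mod_cast hc
        have := hwsub ⟨ht0.le, htw⟩
        simp only [mem_preimage, mem_Iio] at this
        linarith
      rw [hτs] at hws
      have hws' : w ≤ s := by exact_mod_cast hws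
      have hw' : 0 < w := hw
      linarith
    have hfs : 1 < f s := hjump s hτs
    -- right continuity at s: f > (1 + f s)/2 on [s, ρu)
    have hev1 : f ⁻¹' (Ioi ((1 + f s)/2)) ∈ 𝓝[≥] s := hf.1 s hs0.le (Ioi_mem_nhds (by linarith))
    rw [mem_nhdsGE_iff_exists_Ico_subset] at hev1
    obtain ⟨ρu, hρu, hρsub⟩ := hev1
    have hρu' : s < ρu := hρu
    -- left limit L at s
    obtain ⟨L, hL⟩ := hf.2 s hs0
    have hfl1 : ∀ u : ℝ, 0 < u → u < s → f u < 1 := by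
      intro u hu0 hus
      by_contra hc
      push_neg at hc
      have h1 : tauGe 1 f ≤ (u:EReal) := tauGe_le hu0 hc
      rw [hτs] at h1
      have : s ≤ u := by exact_mod_cast h1
      linarith
    have hL1 : L ≤ 1 := by
      have hmem : Ioo 0 s ∈ 𝓝[<] s := Ioo_mem_nhdsLT_of_mem ⟨hs0, le_rfl⟩
      apply le_of_tendsto hL
      filter_upwards [hmem] with u hu
      exact (hfl1 u hu.1 hu.2).le
    have hev2 : f ⁻¹' (Icc (L - ε'/8) (L + ε'/8)) ∈ 𝓝[<] s :=
      hL (Icc_mem_nhds (by linarith) (by linarith))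
    rw [mem_nhdsLT_iff_exists_Ioo_subset] at hev2
    obtain ⟨l, hls, hlsub⟩ := hev2
    have hls' : l < s := hls
    set l' : ℝ := max l 0 with hl'
    have hl's : l' < s := max_lt hls' hs0
    set β : ℝ := (s - l')/2 with hβ
    have hβ0 : 0 < β := by rw [hβ]; linarith
    obtain ⟨c₂, hc₂, hfc₂⟩ := hsup β hβ0
    refine ⟨min (1/8) (min ((1 - c₂)/2) (min ((f s - 1)/4) (min ((ρu - s)/4)
      (min (s/2) (ε' / (8 * (2*B + 1))))))), ?_, ?_⟩
    · refine lt_min (by norm_num) (lt_min (by linarith) (lt_min (by linarith)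
        (lt_min (by linarith) (lt_min (by linarith) (by positivity)))))
    intro g hg γ d hd0 hdδ htc htime hval
    have hd18 : d ≤ 1/8 := hdδ.trans (min_le_left _ _)
    have hdc : d ≤ (1 - c₂)/2 :=
      hdδ.trans ((min_le_right _ _).trans (min_le_left _ _))
    have hda : d ≤ (f s - 1)/4 :=
      hdδ.trans ((min_le_right _ _).trans ((min_le_right _ _).trans (min_le_left _ _)))
    have hdρ : d ≤ (ρu - s)/4 :=
      hdδ.trans ((min_le_right _ _).trans ((min_le_right _ _).trans
        ((min_le_right _ _).trans (min_le_left _ _))))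
    have hds : d ≤ s/2 :=
      hdδ.trans ((min_le_right _ _).trans ((min_le_right _ _).trans
        ((min_le_right _ _).trans ((min_le_right _ _).trans (min_le_left _ _)))))
    have hdε : d ≤ ε' / (8 * (2*B + 1)) :=
      hdδ.trans ((min_le_right _ _).trans ((min_le_right _ _).trans
        ((min_le_right _ _).trans ((min_le_right _ _).trans (min_le_right _ _)))))
    have hJ := unscale hT (by linarith) htime hval
    -- hitting time ts of level s for γ
    have hsmem : s ∈ Icc (γ 0) (γ (T+4)) := by
      rw [htc.2.2.1, htc.2.2.2]
      exact ⟨hs0.le, by linarith⟩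
    obtain ⟨ts, htsmem, hγts⟩ := intermediate_value_Icc (by linarith : (0:ℝ) ≤ T+4) htc.1 hsmem
    have hts1 := abs_le.1 (htime ts htsmem)
    rw [hγts] at hts1
    have hts_le : ts ≤ s + d := by linarith [hts1.1]
    have hts_ge : s - d ≤ ts := by linarith [hts1.2]
    have hts_pos : 0 < ts := by linarith
    have hts2 : ts ∈ Icc (0:ℝ) (T+2) := ⟨hts_pos.le, by linarith⟩
    have hgts : 1 ≤ g ts := by
      have h1 := abs_le.1 (hJ ts hts2)
      rw [hγts] at h1
      linarith [h1.2]
    have hτg_le : tauGe 1 g ≤ (ts : EReal) := tauGe_le hts_pos hgts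
    have hτg_ne_top : tauGe 1 g ≠ ⊤ := (lt_of_le_of_lt hτg_le (EReal.coe_lt_top ts)).ne
    have hτg_ne_bot : tauGe 1 g ≠ ⊥ := by
      intro hbot
      have h1 := tauGe_nonneg 1 g
      rw [hbot] at h1
      simp at h1
    set r : ℝ := (tauGe 1 g).toReal with hrdef
    have hrE : tauGe 1 g = (r : EReal) := (EReal.coe_toReal hτg_ne_top hτg_ne_bot).symm
    have hr0 : 0 ≤ r := by
      have h1 := tauGe_nonneg 1 g
      rw [hrE] at h1
      exact_mod_cast h1
    have hrts : r ≤ ts := by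
      rw [hrE] at hτg_le
      exact_mod_cast hτg_le
    have hrs : r ≤ s + d := hrts.trans hts_le
    have hgr : 1 ≤ g r := one_le_at_tau hg hr0 hrE
    -- key pointwise estimate
    have hkey : ∀ t ∈ Icc (0:ℝ) T, |killRightD f (γ t) - killRightD g t| ≤ d + 2*(ε'/8) := by
      intro t ht
      have ht2 : t ∈ Icc (0:ℝ) (T+2) := ⟨ht.1, by linarith [ht.2]⟩
      have ht4 : t ∈ Icc (0:ℝ) (T+4) := ⟨ht.1, by linarith [ht.2]⟩
      have hγmem := timeChange_mem htc ht4
      rw [killRightD_eq_real hτs (γ t), killRightD_eq_real hrE t]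
      by_cases h1 : γ t < s <;> by_cases h2 : t < r
      · rw [if_pos h1, if_pos h2]
        exact (hJ t ht2).trans (by linarith)
      · -- γ t < s, r ≤ t : g is dead, f is close to its left limit at s
        rw [if_pos h1, if_neg h2]
        push_neg at h2
        have hrT4 : r ∈ Icc (0:ℝ) (T+4) := ⟨hr0, by linarith [ht.2]⟩
        have hγr_le : γ r ≤ γ t := htc.2.1.monotoneOn hrT4 ht4 h2
        have hr2 : r ∈ Icc (0:ℝ) (T+2) := ⟨hr0, by linarith [ht.2]⟩
        have hfγr : 1 - d ≤ f (γ r) := by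
          have hh := abs_le.1 (hJ r hr2)
          linarith [hh.1]
        have hγrmem := timeChange_mem htc hrT4
        have hγrm : s - β ≤ γ r := by
          by_contra hcon
          push_neg at hcon
          have hcc : f (γ r) ≤ c₂ := by
            apply hfc₂ (γ r) hγrmem.1
            rw [hτs]
            exact_mod_cast (by linarith : γ r + β < s)
          linarith
        have hl'β : l' < s - β := by rw [hβ]; linarith
        have hγrIoo : γ r ∈ Ioo l s :=
          ⟨lt_of_le_of_lt (le_max_left l 0) (lt_of_lt_of_le hl'β hγrm),
            lt_of_le_of_lt hγr_le h1⟩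
        have hγtIoo : γ t ∈ Ioo l s := ⟨lt_of_lt_of_le hγrIoo.1 hγr_le, h1⟩
        have hfr := hlsub hγrIoo
        have hft := hlsub hγtIoo
        simp only [mem_preimage, mem_Icc] at hfr hft
        rw [abs_le]
        constructor
        · linarith [hfr.2, hft.1]
        · linarith [hft.2]
      · -- s ≤ γ t and t < r : impossible
        exfalso
        push_neg at h1
        have hh := abs_le.1 (hJ t ht2)
        have h3 := abs_le.1 (htime t ht4)
        by_cases h4 : γ t < ρu
        · have h5 : (1 + f s)/2 < f (γ t) := by
            have := hρsub ⟨h1, h4⟩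
            simpa using this
          have h6 : 1 ≤ g t := by linarith [hh.2]
          have h7 : 0 < t := by linarith [h3.2]
          have h8 : tauGe 1 g ≤ (t : EReal) := tauGe_le h7 h6
          rw [hrE] at h8
          have : r ≤ t := by exact_mod_cast h8
          linarith
        · push_neg at h4
          have h9 : ρu - d ≤ t := by linarith [h3.2]
          linarith
      · rw [if_neg h1, if_neg h2]
        simp only [sub_self, abs_zero]
        linarith
    -- bounds
    have hF : ∀ u ∈ Icc (0:ℝ) T, |killRightD f u| ≤ B := by
      intro u hu
      rw [killRightD_eq_real hτs u]
      by_cases h : u < s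
      · rw [if_pos h]
        exact (hB₀ u ⟨hu.1, by linarith [hu.2]⟩).trans (by linarith)
      · rw [if_neg h, abs_one]
        exact hB1
    have hG : ∀ t ∈ Icc (0:ℝ) T, |killRightD g t| ≤ B := by
      intro t ht
      rw [killRightD_eq_real hrE t]
      by_cases h : t < r
      · rw [if_pos h]
        have h1 := abs_le.1 (hJ t ⟨ht.1, by linarith [ht.2]⟩)
        have hγmem := timeChange_mem htc ⟨ht.1, by linarith [ht.2]⟩
        have h4 := abs_le.1 (hB₀ _ hγmem)
        rw [abs_le]
        exact ⟨by linarith [h1.2, h4.1], by linarith [h1.1, h4.2]⟩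
      · rw [if_neg h, abs_one]
        exact hB1
    have htr := test_transfer hT (by linarith : T + 1 ≤ T+4) htc
      (show 0 < 2*d by linarith) (by linarith : 2*d ≤ 1/2) hd0 (by linarith : d < 2*d)
      (fun t ht => htime t ⟨ht.1, by linarith [ht.2]⟩) hkey
      (by linarith : (0:ℝ) ≤ d + 2*(ε'/8)) hF hG hB0
    apply lt_of_le_of_lt htr
    have h9 : d * (8 * (2*B+1)) ≤ ε' := by
      rw [← le_div_iff₀ (by positivity)]
      exact hdε
    have hh1 : 0 ≤ d * B := mul_nonneg hd0.le hB0
    have hz : (2*d + d) * (2*B + 1) + (d + 2*(ε'/8)) = 6*(d*B) + 4*d + ε'/4 := by ring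
    have hznum : d * (8 * (2*B+1)) = 16*(d*B) + 8*d := by ring
    rw [hz]
    rw [hznum] at h9
    linarith only [h9, hh1, hd0, hε']
  · -- CASE (i): no crossing before T + 3/2
    have htauf : ∀ u : ℝ, u ≤ T + 3/2 → (u : EReal) < tauGe 1 f := by
      intro u hu
      rcases eq_or_ne (tauGe 1 f) ⊤ with htop | htop
      · rw [htop]
        exact EReal.coe_lt_top u
      · have hbot : tauGe 1 f ≠ ⊥ := by
          intro hb
          have h1 := tauGe_nonneg 1 f
          rw [hb] at h1
          simp at h1
        have hs : tauGe 1 f = ((tauGe 1 f).toReal : EReal) := (EReal.coe_toReal htop hbot).symm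
        have hns : ¬ ((tauGe 1 f).toReal ≤ T + 3/2) := fun hc => hcase ⟨_, hs, hc⟩
        push_neg at hns
        rw [hs]
        exact_mod_cast lt_of_le_of_lt hu hns
    obtain ⟨c₁, hc₁, hfc₁⟩ := hsup (1/4) (by norm_num)
    have hfle : ∀ u : ℝ, 0 ≤ u → u ≤ T + 9/8 → f u ≤ c₁ := by
      intro u hu0 hu1
      exact hfc₁ u hu0 (htauf (u + 1/4) (by linarith))
    refine ⟨min (1/8) (min ((1 - c₁)/2) (ε' / (8 * (2*B + 1)))), ?_, ?_⟩
    · exact lt_min (by norm_num) (lt_min (by linarith) (by positivity))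
    intro g hg γ d hd0 hdδ htc htime hval
    have hd18 : d ≤ 1/8 := hdδ.trans (min_le_left _ _)
    have hdc : d ≤ (1 - c₁)/2 := hdδ.trans ((min_le_right _ _).trans (min_le_left _ _))
    have hdε : d ≤ ε' / (8 * (2*B + 1)) :=
      hdδ.trans ((min_le_right _ _).trans (min_le_right _ _))
    have hJ := unscale hT (by linarith) htime hval
    have hτg : ((T+1:ℝ) : EReal) ≤ tauGe 1 g := by
      apply le_tauGe
      intro t ht0 hgt
      by_contra hcon
      push_neg at hcon
      have htT : t < T + 1 := by exact_mod_cast hcon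
      have htmem : t ∈ Icc (0:ℝ) (T+2) := ⟨ht0.le, by linarith⟩
      have h1 := abs_le.1 (hJ t htmem)
      have hγmem := timeChange_mem htc ⟨ht0.le, by linarith⟩
      have h2 := abs_le.1 (htime t ⟨ht0.le, by linarith⟩)
      have h3 : f (γ t) ≤ c₁ := hfle (γ t) hγmem.1 (by linarith [h2.2])
      linarith [h1.1]
    have hDf : ∀ u ∈ Icc (0:ℝ) (T+3/2), killRightD f u = f u := by
      intro u hu
      unfold killRightD
      rw [if_pos (htauf u hu.2)]
    have hDg : ∀ t ∈ Icc (0:ℝ) T, killRightD g t = g t := by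
      intro t ht
      unfold killRightD
      rw [if_pos (lt_of_lt_of_le (show ((t:ℝ) : EReal) < ((T+1:ℝ):EReal) by
        exact_mod_cast (by linarith [ht.2] : t < T + 1)) hτg)]
    have hb : ∀ t ∈ Icc (0:ℝ) T, |killRightD f (γ t) - killRightD g t| ≤ d := by
      intro t ht
      have ht2 : t ∈ Icc (0:ℝ) (T+2) := ⟨ht.1, by linarith [ht.2]⟩
      have h2 := abs_le.1 (htime t ⟨ht.1, by linarith [ht.2]⟩)
      have hγmem := timeChange_mem htc ⟨ht.1, by linarith [ht.2]⟩
      rw [hDf (γ t) ⟨hγmem.1, by linarith [ht.2, h2.2]⟩, hDg t ht]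
      exact hJ t ht2
    have hF : ∀ u ∈ Icc (0:ℝ) T, |killRightD f u| ≤ B := by
      intro u hu
      rw [hDf u ⟨hu.1, by linarith [hu.2]⟩]
      exact (hB₀ u ⟨hu.1, by linarith [hu.2]⟩).trans (by linarith)
    have hG : ∀ t ∈ Icc (0:ℝ) T, |killRightD g t| ≤ B := by
      intro t ht
      rw [hDg t ht]
      have h1 := abs_le.1 (hJ t ⟨ht.1, by linarith [ht.2]⟩)
      have hγmem := timeChange_mem htc ⟨ht.1, by linarith [ht.2]⟩
      have h4 := abs_le.1 (hB₀ _ hγmem)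
      rw [abs_le]
      exact ⟨by linarith [h1.2, h4.1], by linarith [h1.1, h4.2]⟩
    have htr := test_transfer hT (by linarith : T + 1 ≤ T+4) htc
      (show 0 < 2*d by linarith) (by linarith : 2*d ≤ 1/2) hd0 (by linarith : d < 2*d)
      (fun t ht => htime t ⟨ht.1, by linarith [ht.2]⟩) hb hd0.le hF hG hB0
    apply lt_of_le_of_lt htr
    have h9 : d * (8 * (2*B+1)) ≤ ε' := by
      rw [← le_div_iff₀ (by positivity)]
      exact hdε
    have hh1 : 0 ≤ d * B := mul_nonneg hd0.le hB0
    have hz : (2*d + d) * (2*B + 1) + d = 6*(d*B) + 4*d := by ring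
    have hznum : d * (8 * (2*B+1)) = 16*(d*B) + 8*d := by ring
    rw [hz]
    rw [hznum] at h9
    linarith only [h9, hh1, hd0, hε']

lemma dJ1_term_nonneg (f g : ℝ → ℝ) (m : ℕ) :
    0 ≤ (2:ℝ)⁻¹ ^ (m + 1) *
      min 1 (dJ1T ((m:ℝ) + 1) (restrictD ((m:ℝ) + 1) f) (restrictD ((m:ℝ) + 1) g)) :=
  mul_nonneg (by positivity) (le_min zero_le_one (dJ1T_nonneg _ _ _))

lemma dJ1_term_le (f g : ℝ → ℝ) (m : ℕ) :
    (2:ℝ)⁻¹ ^ (m + 1) *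
      min 1 (dJ1T ((m:ℝ) + 1) (restrictD ((m:ℝ) + 1) f) (restrictD ((m:ℝ) + 1) g))
      ≤ (2:ℝ)⁻¹ ^ m := by
  calc (2:ℝ)⁻¹ ^ (m + 1) *
      min 1 (dJ1T ((m:ℝ) + 1) (restrictD ((m:ℝ) + 1) f) (restrictD ((m:ℝ) + 1) g))
      ≤ (2:ℝ)⁻¹ ^ (m + 1) * 1 :=
        mul_le_mul_of_nonneg_left (min_le_left _ _) (by positivity)
    _ = (2:ℝ)⁻¹ ^ (m + 1) := mul_one _
    _ ≤ (2:ℝ)⁻¹ ^ m := pow_le_pow_of_le_one (by norm_num) (by norm_num) (Nat.le_succ m)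

lemma dJ1_summable (f g : ℝ → ℝ) :
    Summable (fun m : ℕ => (2:ℝ)⁻¹ ^ (m + 1) *
      min 1 (dJ1T ((m:ℝ) + 1) (restrictD ((m:ℝ) + 1) f) (restrictD ((m:ℝ) + 1) g))) :=
  Summable.of_nonneg_of_le (dJ1_term_nonneg f g) (dJ1_term_le f g)
    (summable_geometric_of_lt_one (by norm_num) (by norm_num))

lemma dJ1T_set_nonempty {M : ℝ} {f g : ℝ → ℝ} (hf : IsCadlag f) (hg : IsCadlag g)
    (hM : 0 ≤ M) :
    {r : ℝ | 0 ≤ r ∧ ∃ γ : ℝ → ℝ, IsTimeChange M γ ∧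
      (∀ t ∈ Icc (0:ℝ) M, |γ t - t| ≤ r) ∧
      (∀ t ∈ Icc (0:ℝ) M, |restrictD M f (γ t) - restrictD M g t| ≤ r)}.Nonempty := by
  obtain ⟨Bf, hBf0, hBf⟩ := hf.bounded M
  obtain ⟨Bg, hBg0, hBg⟩ := hg.bounded M
  have habs : ∀ a b : ℝ, |a - b| ≤ |a| + |b| := fun a b => by
    simpa [sub_eq_add_neg] using abs_add_le a (-b)
  have hbdd : ∀ (h : ℝ → ℝ) (Bh : ℝ), (∀ t ∈ Icc (0:ℝ) M, |h t| ≤ Bh) →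
      ∀ t ∈ Icc (0:ℝ) M, |restrictD M h t| ≤ Bh := by
    intro h Bh hBh t ht
    have hBh0 : 0 ≤ Bh := (abs_nonneg _).trans (hBh t ht)
    rw [restrictD_eq h ht, abs_mul]
    have hσ0 : 0 ≤ min 1 (M - t) := le_min zero_le_one (by linarith [ht.2])
    calc |min 1 (M - t)| * |h t| ≤ 1 * Bh :=
          mul_le_mul (by rw [abs_of_nonneg hσ0]; exact min_le_left _ _) (hBh t ht)
            (abs_nonneg _) zero_le_one
      _ = Bh := one_mul _
  refine ⟨Bf + Bg, ⟨by linarith, id, ⟨continuousOn_id, fun x _ y _ h => h, rfl, rfl⟩, ?_, ?_⟩⟩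
  · intro t _
    simp only [id_eq, sub_self, abs_zero]
    linarith
  · intro t ht
    simp only [id_eq]
    calc |restrictD M f t - restrictD M g t| ≤ |restrictD M f t| + |restrictD M g t| :=
          habs _ _
      _ ≤ Bf + Bg := add_le_add (hbdd f Bf hBf t ht) (hbdd g Bg hBg t ht)

/-- Proposition 3.6 / `prop:SMkill1`. If `f ∈ D([0,∞),ℝ)` satisfies
`f(0) < 1`, `sup_{0 ≤ t < τ−δ} f(t) < 1` for every `δ > 0` (where
`τ = inf{t>0 : f(t) ≥ 1}`, `inf ∅ = ∞`), and `f(τ) > 1` whenever `τ < ∞`, then `f` is a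
point of continuity of `D^r` for the Skorokhod `J1` metric. -/
theorem killRightD_continuousAt (f : ℝ → ℝ) (hf : IsCadlag f) (h0 : f 0 < 1)
    (hsup : ∀ δ : ℝ, 0 < δ → ∃ c : ℝ, c < 1 ∧ ∀ t : ℝ, 0 ≤ t →
      ((t + δ : ℝ) : EReal) < tauGe 1 f → f t ≤ c)
    (hjump : ∀ s : ℝ, tauGe 1 f = (s : EReal) → 1 < f s) :
    ∀ ε : ℝ, 0 < ε → ∃ δ : ℝ, 0 < δ ∧ ∀ g : ℝ → ℝ, IsCadlag g →
      dJ1 f g < δ → dJ1 (killRightD f) (killRightD g) < ε := by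
  intro ε hε
  obtain ⟨N₀, hN₀⟩ := exists_pow_lt_of_lt_one (show (0:ℝ) < ε/2 by linarith)
    (show (2:ℝ)⁻¹ < 1 by norm_num)
  have hNpow : (2:ℝ)⁻¹ ^ (N₀ + 1) < ε/2 :=
    lt_of_le_of_lt (pow_le_pow_of_le_one (by norm_num) (by norm_num) (Nat.le_succ N₀)) hN₀
  set N : ℕ := N₀ + 1 with hN
  have hwin : ∀ m : ℕ, ∃ δ' : ℝ, 0 < δ' ∧ ∀ g : ℝ → ℝ, IsCadlag g →
      ∀ γ : ℝ → ℝ, ∀ d : ℝ, 0 < d → d ≤ δ' →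
      IsTimeChange (((m:ℝ)+1)+4) γ →
      (∀ t ∈ Icc (0:ℝ) (((m:ℝ)+1)+4), |γ t - t| ≤ d) →
      (∀ t ∈ Icc (0:ℝ) (((m:ℝ)+1)+4),
        |restrictD (((m:ℝ)+1)+4) f (γ t) - restrictD (((m:ℝ)+1)+4) g t| ≤ d) →
      dJ1T ((m:ℝ)+1) (restrictD ((m:ℝ)+1) (killRightD f))
        (restrictD ((m:ℝ)+1) (killRightD g)) < ε/4 := by
    intro m
    exact window f hf h0 hsup hjump ((m:ℝ)+1)
      (by have := Nat.cast_nonneg (α := ℝ) m; linarith) (ε/4) (by linarith)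
  choose D hD hprop using hwin
  have hNne : (Finset.range N).Nonempty := ⟨0, Finset.mem_range.2 (Nat.succ_pos N₀)⟩
  refine ⟨(Finset.range N).inf' hNne (fun m => (2:ℝ)⁻¹ ^ (m + 5) * min (D m) 1), ?_, ?_⟩
  · rw [Finset.lt_inf'_iff]
    intro m _
    exact mul_pos (by positivity) (lt_min (hD m) one_pos)
  intro g hg hclose
  have hterm : ∀ m : ℕ, m < N →
      dJ1T ((m:ℝ)+1) (restrictD ((m:ℝ)+1) (killRightD f))
        (restrictD ((m:ℝ)+1) (killRightD g)) < ε/4 := by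
    intro m hm
    have hδm : (Finset.range N).inf' hNne (fun m => (2:ℝ)⁻¹ ^ (m + 5) * min (D m) 1)
        ≤ (2:ℝ)⁻¹ ^ (m + 5) * min (D m) 1 :=
      Finset.inf'_le _ (Finset.mem_range.2 hm)
    have hle := Summable.le_tsum (dJ1_summable f g) (m+4) (fun b' _ => dJ1_term_nonneg f g b')
    have hdj : dJ1 f g = ∑' k : ℕ, (2:ℝ)⁻¹ ^ (k + 1) *
        min 1 (dJ1T ((k:ℝ) + 1) (restrictD ((k:ℝ) + 1) f) (restrictD ((k:ℝ) + 1) g)) := rfl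
    rw [← hdj] at hle
    have hlt : (2:ℝ)⁻¹ ^ (m + 4 + 1) *
        min 1 (dJ1T (((m+4:ℕ):ℝ) + 1) (restrictD (((m+4:ℕ):ℝ) + 1) f)
          (restrictD (((m+4:ℕ):ℝ) + 1) g))
        < (2:ℝ)⁻¹ ^ (m + 5) * min (D m) 1 :=
      lt_of_le_of_lt hle (lt_of_lt_of_le hclose hδm)
    have hexp : m + 4 + 1 = m + 5 := rfl
    rw [hexp] at hlt
    have hX1 : min 1 (dJ1T (((m+4:ℕ):ℝ) + 1) (restrictD (((m+4:ℕ):ℝ) + 1) f)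
        (restrictD (((m+4:ℕ):ℝ) + 1) g)) < min (D m) 1 :=
      lt_of_mul_lt_mul_left hlt (by positivity)
    have hXlt : dJ1T (((m+4:ℕ):ℝ) + 1) (restrictD (((m+4:ℕ):ℝ) + 1) f)
        (restrictD (((m+4:ℕ):ℝ) + 1) g) < min (D m) 1 := by
      rcases le_or_gt 1 (dJ1T (((m+4:ℕ):ℝ) + 1) (restrictD (((m+4:ℕ):ℝ) + 1) f)
        (restrictD (((m+4:ℕ):ℝ) + 1) g)) with hX | hX
      · exfalso
        rw [min_eq_left hX] at hX1
        have := min_le_right (D m) 1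
        linarith
      · rwa [min_eq_right hX.le] at hX1
    have hne := dJ1T_set_nonempty (M := ((m+4:ℕ):ℝ)+1) hf hg (by positivity)
    unfold dJ1T at hXlt
    obtain ⟨ρ, hρS, hρlt⟩ := exists_lt_of_csInf_lt hne hXlt
    obtain ⟨hρ0, γ, htc, htm, hvl⟩ := hρS
    have hMcast : ((m+4:ℕ):ℝ) + 1 = ((m:ℝ)+1) + 4 := by push_cast; ring
    rw [hMcast] at htc htm hvl
    exact hprop m g hg γ (min (D m) 1) (lt_min (hD m) one_pos) (min_le_left _ _) htc
      (fun t ht => (htm t ht).trans hρlt.le) (fun t ht => (hvl t ht).trans hρlt.le)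
  -- final summation
  have hsumD := dJ1_summable (killRightD f) (killRightD g)
  have hsplit := Summable.sum_add_tsum_nat_add N hsumD
  have hdjD : dJ1 (killRightD f) (killRightD g) = ∑' k : ℕ, (2:ℝ)⁻¹ ^ (k + 1) *
      min 1 (dJ1T ((k:ℝ) + 1) (restrictD ((k:ℝ) + 1) (killRightD f))
        (restrictD ((k:ℝ) + 1) (killRightD g))) := rfl
  rw [hdjD, ← hsplit]
  have hb1 : ∑ i ∈ Finset.range N, (2:ℝ)⁻¹ ^ (i + 1) *
      min 1 (dJ1T ((i:ℝ) + 1) (restrictD ((i:ℝ) + 1) (killRightD f))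
        (restrictD ((i:ℝ) + 1) (killRightD g))) ≤ ε/4 := by
    have hstep : ∀ i ∈ Finset.range N, (2:ℝ)⁻¹ ^ (i + 1) *
        min 1 (dJ1T ((i:ℝ) + 1) (restrictD ((i:ℝ) + 1) (killRightD f))
          (restrictD ((i:ℝ) + 1) (killRightD g))) ≤ (2:ℝ)⁻¹ ^ (i + 1) * (ε/4) := by
      intro i hi
      apply mul_le_mul_of_nonneg_left _ (by positivity)
      exact (min_le_right _ _).trans (hterm i (Finset.mem_range.1 hi)).le
    calc ∑ i ∈ Finset.range N, (2:ℝ)⁻¹ ^ (i + 1) *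
        min 1 (dJ1T ((i:ℝ) + 1) (restrictD ((i:ℝ) + 1) (killRightD f))
          (restrictD ((i:ℝ) + 1) (killRightD g)))
        ≤ ∑ i ∈ Finset.range N, (2:ℝ)⁻¹ ^ (i + 1) * (ε/4) := Finset.sum_le_sum hstep
      _ = (∑ i ∈ Finset.range N, (2:ℝ)⁻¹ ^ (i + 1)) * (ε/4) := by rw [Finset.sum_mul]
      _ ≤ 1 * (ε/4) := by
          apply mul_le_mul_of_nonneg_right _ (by linarith)
          have h1 : ∑ i ∈ Finset.range N, (2:ℝ)⁻¹ ^ (i + 1)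
              = (∑ i ∈ Finset.range N, (2:ℝ)⁻¹ ^ i) * 2⁻¹ := by
            rw [Finset.sum_mul]
            exact Finset.sum_congr rfl fun i _ => (pow_succ _ _)
          rw [h1]
          have h2 : ∑ i ∈ Finset.range N, (2:ℝ)⁻¹ ^ i ≤ 2 := by
            have := sum_geometric_two_le N
            simpa [one_div] using this
          linarith
      _ = ε/4 := one_mul _
  have hb2 : ∑' i : ℕ, (2:ℝ)⁻¹ ^ ((i + N) + 1) *
      min 1 (dJ1T (((i + N : ℕ):ℝ) + 1) (restrictD (((i + N : ℕ):ℝ) + 1) (killRightD f))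
        (restrictD (((i + N : ℕ):ℝ) + 1) (killRightD g))) ≤ (2:ℝ)⁻¹ ^ N := by
    have hstep : ∀ i : ℕ, (2:ℝ)⁻¹ ^ ((i + N) + 1) *
        min 1 (dJ1T (((i + N : ℕ):ℝ) + 1) (restrictD (((i + N : ℕ):ℝ) + 1) (killRightD f))
          (restrictD (((i + N : ℕ):ℝ) + 1) (killRightD g)))
        ≤ (2:ℝ)⁻¹ ^ (N + 1) * (2:ℝ)⁻¹ ^ i := by
      intro i
      have h1 : (2:ℝ)⁻¹ ^ ((i + N) + 1) *
          min 1 (dJ1T (((i + N : ℕ):ℝ) + 1) (restrictD (((i + N : ℕ):ℝ) + 1) (killRightD f))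
            (restrictD (((i + N : ℕ):ℝ) + 1) (killRightD g)))
          ≤ (2:ℝ)⁻¹ ^ ((i + N) + 1) := by
        apply mul_le_of_le_one_right (by positivity)
        exact min_le_left _ _
      have h2 : (2:ℝ)⁻¹ ^ ((i + N) + 1) = (2:ℝ)⁻¹ ^ (N + 1) * (2:ℝ)⁻¹ ^ i := by
        rw [← pow_add]
        congr 1
        omega
      rw [← h2]
      exact h1
    calc ∑' i : ℕ, (2:ℝ)⁻¹ ^ ((i + N) + 1) *
        min 1 (dJ1T (((i + N : ℕ):ℝ) + 1) (restrictD (((i + N : ℕ):ℝ) + 1) (killRightD f))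
          (restrictD (((i + N : ℕ):ℝ) + 1) (killRightD g)))
        ≤ ∑' i : ℕ, (2:ℝ)⁻¹ ^ (N + 1) * (2:ℝ)⁻¹ ^ i := by
          apply Summable.tsum_le_tsum hstep
          · exact (summable_nat_add_iff N).2 hsumD
          · exact (summable_geometric_of_lt_one (by norm_num) (by norm_num)).mul_left _
      _ = (2:ℝ)⁻¹ ^ (N + 1) * (1 - 2⁻¹)⁻¹ := by
          rw [tsum_mul_left, tsum_geometric_of_lt_one (by norm_num) (by norm_num)]
      _ = (2:ℝ)⁻¹ ^ N := by
          rw [pow_succ]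
          norm_num
          ring
  have : (2:ℝ)⁻¹ ^ N < ε/2 := hNpow
  linarith [hb1, hb2]
end
end

section
/- Let a ∈ ℝ, T > 0, let f, g ∈ D([0,T],ℝ), let γ : [0,T] → [0,T] be a strictly increasing continuous bijection, and let δ ≥ sup_{t∈[0,T]} |g(γ(t)) − f(t)|. Set A_f(t) = ∫₀^t 1{f(z)>a} dz and A_g(t) = ∫₀^t 1{g(z)>a} dz. Then for every t ∈ [0,T]: |A_g(γ(t)) − A_f(t)| ≤ sup_{s∈[0,T]}|γ(s) − s| + λ( z ∈ [0,T] : g(γ(z)) ≤ a < g(z) or g(z) ≤ a < g(γ(z)) ) + λ( z ∈ [0,T] : |f(z) − a| ≤ δ ), where λ is Lebesgue measure. -/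
open MeasureTheory Set Filter Topology

noncomputable section

/-- `f` is càdlàg on `[0,T]`: right-continuous on `[0,T)` and with left limits on
`(0,T]`. -/
def IsCadlagOn (f : ℝ → ℝ) (T : ℝ) : Prop :=
  (∀ t ∈ Ico (0:ℝ) T, Tendsto f (𝓝[≥] t) (𝓝 (f t))) ∧
  (∀ t ∈ Ioc (0:ℝ) T, ∃ L : ℝ, Tendsto f (𝓝[<] t) (𝓝 L))

/-- A function right-continuous on `[0,T)` is a.e. measurable on `[0,T]`. -/
lemma aemeas_of_rightCont {f : ℝ → ℝ} {T : ℝ}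
    (h : ∀ t ∈ Ico (0:ℝ) T, Tendsto f (𝓝[≥] t) (𝓝 (f t))) :
    AEMeasurable f (volume.restrict (Icc (0:ℝ) T)) := by
  set F : ℕ → ℝ → ℝ :=
    fun n z => (fun k : ℤ => f (((k : ℝ) + 1) / 2 ^ n)) (⌊z * (2:ℝ) ^ n⌋) with hF
  have Fmeas : ∀ n, Measurable (F n) := by
    intro n
    have e : F n = (fun k : ℤ => f (((k : ℝ) + 1) / 2 ^ n)) ∘
        (fun z : ℝ => ⌊z * (2:ℝ) ^ n⌋) := rfl
    rw [e]
    have h1 : Measurable fun z : ℝ => ⌊z * (2:ℝ) ^ n⌋ :=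
      Int.measurable_floor.comp (measurable_mul_const _)
    exact measurable_from_top.comp h1
  have h1 : ∀ᵐ z ∂(volume.restrict (Icc (0:ℝ) T)), z ∈ Icc (0:ℝ) T :=
    ae_restrict_mem measurableSet_Icc
  have h2 : ∀ᵐ z ∂(volume.restrict (Icc (0:ℝ) T)), z ≠ T := by
    rw [ae_iff]
    refine measure_mono_null (fun z hz => ?_) (show (volume.restrict (Icc (0:ℝ) T)) {T} = 0 from ?_)
    · simp only [mem_setOf_eq, not_not] at hz; exact hz
    · rw [Measure.restrict_apply (measurableSet_singleton T)]
      exact measure_mono_null (inter_subset_left) (measure_singleton T)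
  refine aemeasurable_of_tendsto_metrizable_ae' (fun n => (Fmeas n).aemeasurable) ?_
  filter_upwards [h1, h2] with z hzIcc hzT
  have hzIco : z ∈ Ico (0:ℝ) T := ⟨hzIcc.1, lt_of_le_of_ne hzIcc.2 hzT⟩
  -- the dyadic right approximations
  set s : ℕ → ℝ := fun n => ((⌊z * (2:ℝ) ^ n⌋ : ℝ) + 1) / 2 ^ n with hs
  have h2n : ∀ n : ℕ, (0:ℝ) < 2 ^ n := fun n => by positivity
  have hlt : ∀ n, z < s n := by
    intro n
    rw [hs, lt_div_iff₀ (h2n n)]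
    exact Int.lt_floor_add_one (z * 2 ^ n)
  have hle : ∀ n, s n ≤ z + (1 / 2) ^ n := by
    intro n
    rw [hs, div_le_iff₀ (h2n n)]
    have := Int.floor_le (z * (2:ℝ) ^ n)
    have h2 : ((1:ℝ) / 2) ^ n * 2 ^ n = 1 := by
      rw [← mul_pow]; norm_num
    nlinarith [h2n n]
  have htends : Tendsto s atTop (𝓝[≥] z) := by
    rw [tendsto_nhdsWithin_iff]
    constructor
    · have hhtend : Tendsto (fun n : ℕ => z + (1 / 2 : ℝ) ^ n) atTop (𝓝 z) := by
        have h0 : Tendsto (fun n : ℕ => ((1:ℝ) / 2) ^ n) atTop (𝓝 0) := by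
          apply tendsto_pow_atTop_nhds_zero_of_lt_one <;> norm_num
        simpa using tendsto_const_nhds.add h0
      have hlow : ∀ n, (fun _ : ℕ => z) n ≤ s n := fun n => (hlt n).le
      exact tendsto_of_tendsto_of_tendsto_of_le_of_le tendsto_const_nhds hhtend hlow hle
    · exact Eventually.of_forall fun n => le_of_lt (hlt n)
  have := (h z hzIco).comp htends
  exact this

lemma timeChange_maps {T : ℝ} {γ : ℝ → ℝ} (hγ : IsTimeChange T γ) (hT : 0 ≤ T) :
    ∀ s ∈ Icc (0:ℝ) T, γ s ∈ Icc (0:ℝ) T := by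
  intro s hs
  obtain ⟨hc, hm, h0, hTT⟩ := hγ
  constructor
  · rw [← h0]; exact hm.monotoneOn (left_mem_Icc.2 hT) hs hs.1
  · rw [← hTT]; exact hm.monotoneOn hs (right_mem_Icc.2 hT) hs.2

lemma comp_rightCont {T : ℝ} {g γ : ℝ → ℝ}
    (hg : ∀ t ∈ Ico (0:ℝ) T, Tendsto g (𝓝[≥] t) (𝓝 (g t)))
    (hγ : IsTimeChange T γ) :
    ∀ t ∈ Ico (0:ℝ) T, Tendsto (fun z => g (γ z)) (𝓝[≥] t) (𝓝 (g (γ t))) := by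
  intro t ht
  have hT : (0:ℝ) ≤ T := le_trans ht.1 ht.2.le
  obtain ⟨hc, hm, h0, hTT⟩ := hγ
  have htIcc : t ∈ Icc (0:ℝ) T := ⟨ht.1, ht.2.le⟩
  have hmem : Icc (0:ℝ) T ∈ 𝓝[≥] t := by
    rw [mem_nhdsWithin]
    exact ⟨Iio T, isOpen_Iio, ht.2, fun z hz => ⟨le_trans ht.1 hz.2, hz.1.le⟩⟩
  have h1 : Tendsto γ (𝓝[≥] t) (𝓝 (γ t)) :=
    (hc t htIcc).mono_left (nhdsWithin_le_of_mem hmem)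
  have h2 : Tendsto γ (𝓝[≥] t) (𝓝[≥] (γ t)) := by
    rw [tendsto_nhdsWithin_iff]
    refine ⟨h1, ?_⟩
    filter_upwards [hmem, self_mem_nhdsWithin] with z hzIcc hzt
    exact hm.monotoneOn htIcc hzIcc hzt
  have hγt : γ t ∈ Ico (0:ℝ) T := by
    refine ⟨(timeChange_maps ⟨hc, hm, h0, hTT⟩ hT t htIcc).1, ?_⟩
    rw [← hTT]
    exact hm htIcc (right_mem_Icc.2 hT) ht.2
  exact (hg (γ t) hγt).comp h2

lemma nullmeas_inter {T : ℝ} {S : Set ℝ}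
    (h : NullMeasurableSet S (volume.restrict (Icc (0:ℝ) T))) :
    NullMeasurableSet (Icc (0:ℝ) T ∩ S) volume := by
  obtain ⟨S', hsub, hS'meas, hae⟩ := h.exists_measurable_subset_ae_eq
  have h1 : (volume.restrict (Icc (0:ℝ) T)) (S \ S') = 0 := (ae_eq_set.1 hae).2
  rw [Measure.restrict_apply' measurableSet_Icc] at h1
  have hbase : NullMeasurableSet (Icc (0:ℝ) T ∩ S') volume :=
    (measurableSet_Icc.inter hS'meas).nullMeasurableSet
  refine hbase.congr ?_
  rw [ae_eq_set]
  constructor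
  · refine measure_mono_null (fun z hz => ?_) (measure_empty)
    exact (hz.2 ⟨hz.1.1, hsub hz.1.2⟩).elim
  · refine measure_mono_null (fun z hz => ?_) h1
    exact ⟨⟨hz.1.2, fun hz' => hz.2 ⟨hz.1.1, hz'⟩⟩, hz.1.1⟩

lemma integrableOn_indicator_one {A : Set ℝ} {T : ℝ} {S : Set ℝ}
    (hS : NullMeasurableSet S (volume.restrict (Icc (0:ℝ) T)))
    (hA : A ⊆ Icc (0:ℝ) T) [IsFiniteMeasure (volume.restrict A)] :
    IntegrableOn (S.indicator (fun _ => (1:ℝ))) A volume := by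
  obtain ⟨S', hsub, hS'meas, hae⟩ := hS.exists_measurable_subset_ae_eq
  have hind : S'.indicator (fun _ => (1:ℝ)) =ᵐ[volume.restrict (Icc (0:ℝ) T)]
      S.indicator (fun _ => (1:ℝ)) := indicator_ae_eq_of_ae_eq_set hae
  have hindA : S'.indicator (fun _ => (1:ℝ)) =ᵐ[volume.restrict A]
      S.indicator (fun _ => (1:ℝ)) :=
    ae_mono (Measure.restrict_mono hA le_rfl) hind
  have haesm : AEStronglyMeasurable (S.indicator (fun _ => (1:ℝ))) (volume.restrict A) :=
    ((measurable_const.indicator hS'meas).aestronglyMeasurable).congr hindA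
  refine ⟨haesm, HasFiniteIntegral.of_bounded (C := 1) ?_⟩
  refine Eventually.of_forall fun z => ?_
  by_cases hz : z ∈ S <;> simp [Set.indicator_apply, hz]

lemma intervalIntegrable_indicator_one {T u v : ℝ} {S : Set ℝ}
    (hS : NullMeasurableSet S (volume.restrict (Icc (0:ℝ) T)))
    (hu : u ∈ Icc (0:ℝ) T) (hv : v ∈ Icc (0:ℝ) T) :
    IntervalIntegrable (S.indicator (fun _ => (1:ℝ))) volume u v := by
  constructor
  · exact integrableOn_indicator_one hS
      (fun z hz => ⟨le_trans hu.1 hz.1.le, le_trans hz.2 hv.2⟩)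
  · exact integrableOn_indicator_one hS
      (fun z hz => ⟨le_trans hv.1 hz.1.le, le_trans hz.2 hu.2⟩)

lemma integral_indicator_le {t : ℝ} {E : Set ℝ} (ht : 0 ≤ t)
    (hE : NullMeasurableSet E volume) (hfin : volume E ≠ ⊤) :
    ∫ z in (0:ℝ)..t, E.indicator (fun _ => (1:ℝ)) z ≤ (volume E).toReal := by
  obtain ⟨E', hsub, hE'meas, hae⟩ := hE.exists_measurable_subset_ae_eq
  have hvol : volume E' = volume E := measure_congr hae
  have hind : E'.indicator (fun _ => (1:ℝ)) =ᵐ[volume] E.indicator (fun _ => (1:ℝ)) :=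
    indicator_ae_eq_of_ae_eq_set hae
  have hint : Integrable (E'.indicator (fun _ => (1:ℝ))) volume := by
    rw [integrable_indicator_iff hE'meas]
    exact integrableOn_const (by rw [hvol]; exact hfin)
  rw [intervalIntegral.integral_of_le ht]
  calc ∫ z in Ioc (0:ℝ) t, E.indicator (fun _ => (1:ℝ)) z
      = ∫ z in Ioc (0:ℝ) t, E'.indicator (fun _ => (1:ℝ)) z :=
        integral_congr_ae (ae_restrict_of_ae hind.symm)
    _ ≤ ∫ z, E'.indicator (fun _ => (1:ℝ)) z :=
        setIntegral_le_integral hint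
          (Eventually.of_forall fun z => Set.indicator_nonneg (fun _ _ => zero_le_one) z)
    _ = (volume E').toReal := by
        exact integral_indicator_one hE'meas
    _ = (volume E).toReal := by rw [hvol]

set_option maxHeartbeats 1600000 in
/-- the key time-delay estimate, Step (ii) of the proof of Theorem 3.11
/ `eq:keyestimate`. For `f, g ∈ D([0,T],ℝ)`, a Skorokhod time change `γ` of `[0,T]` and
any `δ ≥ sup_{t∈[0,T]} |g(γ(t)) − f(t)|`, for every `t ∈ [0,T]`:
`|A_g(γ(t)) − A_f(t)| ≤ sup_{s∈[0,T]} |γ(s)−s|`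
`+ λ(z ∈ [0,T] : g(γ(z)) ≤ a < g(z) or g(z) ≤ a < g(γ(z)))`
`+ λ(z ∈ [0,T] : |f(z) − a| ≤ δ)`. -/
theorem occUpper_time_delay_estimate (a T : ℝ) (hT : 0 < T) (f g γ : ℝ → ℝ)
    (hf : IsCadlagOn f T) (hg : IsCadlagOn g T) (hγ : IsTimeChange T γ)
    (δ : ℝ) (hδ : ∀ t ∈ Icc (0:ℝ) T, |g (γ t) - f t| ≤ δ) :
    ∀ t ∈ Icc (0:ℝ) T,
      |occUpper a g (γ t) - occUpper a f t| ≤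
        (⨆ s : Icc (0:ℝ) T, |γ (s:ℝ) - (s:ℝ)|)
        + (volume {z : ℝ | z ∈ Icc (0:ℝ) T ∧
            ((g (γ z) ≤ a ∧ a < g z) ∨ (g z ≤ a ∧ a < g (γ z)))}).toReal
        + (volume {z : ℝ | z ∈ Icc (0:ℝ) T ∧ |f z - a| ≤ δ}).toReal := by
  intro t ht
  have hT0 : (0:ℝ) ≤ T := hT.le
  set μ := volume.restrict (Icc (0:ℝ) T) with hμ
  have hγmaps := timeChange_maps hγ hT0
  have hγt : γ t ∈ Icc (0:ℝ) T := hγmaps t ht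
  have h0Icc : (0:ℝ) ∈ Icc (0:ℝ) T := left_mem_Icc.2 hT0
  -- a.e. measurability
  have haef : AEMeasurable f μ := aemeas_of_rightCont hf.1
  have haeg : AEMeasurable g μ := aemeas_of_rightCont hg.1
  have haegγ : AEMeasurable (fun z => g (γ z)) μ :=
    aemeas_of_rightCont (comp_rightCont hg.1 hγ)
  -- indicator functions
  set Gi := ({z : ℝ | a < g z}.indicator (fun _ => (1:ℝ))) with hGi
  set Fi := ({z : ℝ | a < f z}.indicator (fun _ => (1:ℝ))) with hFi
  -- the two exceptional sets (as written in the statement)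
  set E1 := {z : ℝ | z ∈ Icc (0:ℝ) T ∧
      ((g (γ z) ≤ a ∧ a < g z) ∨ (g z ≤ a ∧ a < g (γ z)))} with hE1
  set E2 := {z : ℝ | z ∈ Icc (0:ℝ) T ∧ |f z - a| ≤ δ} with hE2
  -- null measurability of the various sets
  have hSg : NullMeasurableSet {z : ℝ | a < g z} μ :=
    haeg.nullMeasurable measurableSet_Ioi
  have hSf : NullMeasurableSet {z : ℝ | a < f z} μ :=
    haef.nullMeasurable measurableSet_Ioi
  have hE1' : NullMeasurableSet
      {z : ℝ | (g (γ z) ≤ a ∧ a < g z) ∨ (g z ≤ a ∧ a < g (γ z))} μ := by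
    have e : {z : ℝ | (g (γ z) ≤ a ∧ a < g z) ∨ (g z ≤ a ∧ a < g (γ z))} =
        (((fun z => g (γ z)) ⁻¹' Iic a) ∩ (g ⁻¹' Ioi a)) ∪
          ((g ⁻¹' Iic a) ∩ ((fun z => g (γ z)) ⁻¹' Ioi a)) := by
      ext z
      simp only [mem_setOf_eq, mem_union, mem_inter_iff, mem_preimage, mem_Iic, mem_Ioi]
    rw [e]
    exact ((haegγ.nullMeasurable measurableSet_Iic).inter
        (haeg.nullMeasurable measurableSet_Ioi)).union
      ((haeg.nullMeasurable measurableSet_Iic).inter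
        (haegγ.nullMeasurable measurableSet_Ioi))
  have hE2' : NullMeasurableSet {z : ℝ | |f z - a| ≤ δ} μ := by
    have hm : AEMeasurable (fun z => |f z - a|) μ :=
      measurable_abs.comp_aemeasurable (haef.sub aemeasurable_const)
    exact hm.nullMeasurable measurableSet_Iic
  have hE1meas : NullMeasurableSet E1 volume := by
    have e : E1 = Icc (0:ℝ) T ∩
        {z : ℝ | (g (γ z) ≤ a ∧ a < g z) ∨ (g z ≤ a ∧ a < g (γ z))} := by
      rw [hE1]; ext z; simp only [mem_inter_iff, mem_setOf_eq]
    rw [e]; exact nullmeas_inter hE1'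
  have hE2meas : NullMeasurableSet E2 volume := by
    have e : E2 = Icc (0:ℝ) T ∩ {z : ℝ | |f z - a| ≤ δ} := by
      rw [hE2]; ext z; simp only [mem_inter_iff, mem_setOf_eq]
    rw [e]; exact nullmeas_inter hE2'
  have hE1sub : E1 ⊆ Icc (0:ℝ) T := fun z hz => hz.1
  have hE2sub : E2 ⊆ Icc (0:ℝ) T := fun z hz => hz.1
  have hE1fin : volume E1 ≠ ⊤ :=
    ne_top_of_le_ne_top (ne_of_lt measure_Icc_lt_top) (measure_mono hE1sub)
  have hE2fin : volume E2 ≠ ⊤ :=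
    ne_top_of_le_ne_top (ne_of_lt measure_Icc_lt_top) (measure_mono hE2sub)
  -- interval integrability
  have hGint1 : IntervalIntegrable Gi volume 0 t :=
    intervalIntegrable_indicator_one hSg h0Icc ht
  have hGint2 : IntervalIntegrable Gi volume t (γ t) :=
    intervalIntegrable_indicator_one hSg ht hγt
  have hFint1 : IntervalIntegrable Fi volume 0 t :=
    intervalIntegrable_indicator_one hSf h0Icc ht
  have hE1int : IntervalIntegrable (E1.indicator (fun _ => (1:ℝ))) volume 0 t := by
    refine intervalIntegrable_indicator_one (T := T) ?_ h0Icc ht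
    exact hE1meas.mono_ac (Measure.restrict_le_self.absolutelyContinuous)
  have hE2int : IntervalIntegrable (E2.indicator (fun _ => (1:ℝ))) volume 0 t := by
    refine intervalIntegrable_indicator_one (T := T) ?_ h0Icc ht
    exact hE2meas.mono_ac (Measure.restrict_le_self.absolutelyContinuous)
  -- split the difference
  have hsplit : occUpper a g (γ t) - occUpper a f t =
      (∫ z in t..(γ t), Gi z) + ((∫ z in (0:ℝ)..t, Gi z) - (∫ z in (0:ℝ)..t, Fi z)) := by
    have := intervalIntegral.integral_add_adjacent_intervals hGint1 hGint2
    simp only [occUpper, ← hGi, ← hFi]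
    rw [← this]; ring
  -- bound the time-shift term
  have hsup : |∫ z in t..(γ t), Gi z| ≤ ⨆ s : Icc (0:ℝ) T, |γ (s:ℝ) - (s:ℝ)| := by
    have hb : |∫ z in t..(γ t), Gi z| ≤ 1 * |γ t - t| := by
      rw [← Real.norm_eq_abs]
      refine intervalIntegral.norm_integral_le_of_norm_le_const fun z _ => ?_
      rw [Real.norm_eq_abs]
      by_cases hz : z ∈ {z : ℝ | a < g z} <;> simp [hGi, Set.indicator_apply, hz]
    rw [one_mul] at hb
    refine hb.trans ?_
    have hbdd : BddAbove (Set.range fun s : Icc (0:ℝ) T => |γ (s:ℝ) - (s:ℝ)|) := by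
      refine ⟨T, ?_⟩
      rintro x ⟨⟨s, hs⟩, rfl⟩
      have h1 := hγmaps s hs
      simp only
      rw [abs_le]
      constructor <;> [nlinarith [h1.1, hs.2]; nlinarith [h1.2, hs.1]]
    exact le_ciSup hbdd (⟨t, ht⟩ : Icc (0:ℝ) T)
  -- pointwise bound for the second term
  have hpt : ∀ z ∈ Icc (0:ℝ) t, |Gi z - Fi z| ≤
      E1.indicator (fun _ => (1:ℝ)) z + E2.indicator (fun _ => (1:ℝ)) z := by
    intro z hz
    have hzIcc : z ∈ Icc (0:ℝ) T := ⟨hz.1, le_trans hz.2 ht.2⟩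
    have hδ0 : 0 ≤ δ := le_trans (abs_nonneg _) (hδ z hzIcc)
    have habs := abs_le.1 (hδ z hzIcc)
    have hE1nn : (0:ℝ) ≤ E1.indicator (fun _ => (1:ℝ)) z :=
      Set.indicator_nonneg (fun _ _ => zero_le_one) z
    have hE2nn : (0:ℝ) ≤ E2.indicator (fun _ => (1:ℝ)) z :=
      Set.indicator_nonneg (fun _ _ => zero_le_one) z
    have habs1 : |(1:ℝ) - 0| = 1 := by norm_num
    have habs2 : |(0:ℝ) - 1| = 1 := by norm_num
    by_cases hgz : a < g z <;> by_cases hfz : a < f z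
    · rw [hGi, hFi, Set.indicator_of_mem (show z ∈ {z : ℝ | a < g z} from hgz),
        Set.indicator_of_mem (show z ∈ {z : ℝ | a < f z} from hfz)]
      simpa using add_nonneg hE1nn hE2nn
    · -- g z > a, f z ≤ a
      rw [hGi, hFi, Set.indicator_of_mem (show z ∈ {z : ℝ | a < g z} from hgz),
        Set.indicator_of_notMem (show z ∉ {z : ℝ | a < f z} from hfz)]
      push_neg at hfz
      by_cases hgγ : a < g (γ z)
      · have hz2 : z ∈ E2 := ⟨hzIcc, abs_le.2 ⟨by linarith [habs.1], by linarith⟩⟩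
        rw [Set.indicator_of_mem hz2]
        linarith [hE1nn, habs1]
      · push_neg at hgγ
        have hz1 : z ∈ E1 := ⟨hzIcc, Or.inl ⟨hgγ, hgz⟩⟩
        rw [Set.indicator_of_mem hz1]
        linarith [hE2nn, habs1]
    · -- g z ≤ a, f z > a
      rw [hGi, hFi, Set.indicator_of_notMem (show z ∉ {z : ℝ | a < g z} from hgz),
        Set.indicator_of_mem (show z ∈ {z : ℝ | a < f z} from hfz)]
      push_neg at hgz
      by_cases hgγ : a < g (γ z)
      · have hz1 : z ∈ E1 := ⟨hzIcc, Or.inr ⟨hgz, hgγ⟩⟩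
        rw [Set.indicator_of_mem hz1]
        linarith [hE2nn, habs2]
      · push_neg at hgγ
        have hz2 : z ∈ E2 := ⟨hzIcc, abs_le.2 ⟨by linarith, by linarith [habs.2]⟩⟩
        rw [Set.indicator_of_mem hz2]
        linarith [hE1nn, habs2]
    · rw [hGi, hFi, Set.indicator_of_notMem (show z ∉ {z : ℝ | a < g z} from hgz),
        Set.indicator_of_notMem (show z ∉ {z : ℝ | a < f z} from hfz)]
      simpa using add_nonneg hE1nn hE2nn
  -- bound the second term by the measures
  have hmain : |(∫ z in (0:ℝ)..t, Gi z) - (∫ z in (0:ℝ)..t, Fi z)| ≤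
      (volume E1).toReal + (volume E2).toReal := by
    rw [← intervalIntegral.integral_sub hGint1 hFint1, ← Real.norm_eq_abs]
    calc ‖∫ z in (0:ℝ)..t, (Gi z - Fi z)‖
        ≤ ∫ z in (0:ℝ)..t, ‖Gi z - Fi z‖ :=
          intervalIntegral.norm_integral_le_integral_norm ht.1
      _ ≤ ∫ z in (0:ℝ)..t,
            (E1.indicator (fun _ => (1:ℝ)) z + E2.indicator (fun _ => (1:ℝ)) z) := by
          refine intervalIntegral.integral_mono_on ht.1 ((hGint1.sub hFint1).norm)
            (hE1int.add hE2int) fun z hz => ?_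
          rw [Real.norm_eq_abs]
          exact hpt z hz
      _ = (∫ z in (0:ℝ)..t, E1.indicator (fun _ => (1:ℝ)) z)
            + ∫ z in (0:ℝ)..t, E2.indicator (fun _ => (1:ℝ)) z :=
          intervalIntegral.integral_add hE1int hE2int
      _ ≤ (volume E1).toReal + (volume E2).toReal :=
          add_le_add (integral_indicator_le ht.1 hE1meas hE1fin)
            (integral_indicator_le ht.1 hE2meas hE2fin)
  calc |occUpper a g (γ t) - occUpper a f t|
      ≤ |∫ z in t..(γ t), Gi z| +
          |(∫ z in (0:ℝ)..t, Gi z) - (∫ z in (0:ℝ)..t, Fi z)| := by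
        rw [hsplit]; exact abs_add_le _ _
    _ ≤ (⨆ s : Icc (0:ℝ) T, |γ (s:ℝ) - (s:ℝ)|) + ((volume E1).toReal + (volume E2).toReal) :=
        add_le_add hsup hmain
    _ = (⨆ s : Icc (0:ℝ) T, |γ (s:ℝ) - (s:ℝ)|) + (volume E1).toReal + (volume E2).toReal := by
        ring
end
end

section
/- For every Borel set B ⊆ ℝ, the map f ↦ λ( t ∈ [0,∞) : f(t) ∈ B ) from D([0,∞),ℝ) to [0,∞] is measurable with respect to the Borel σ-algebra of the Skorokhod J1 topology, where λ is Lebesgue measure on [0,∞). -/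
open MeasureTheory Set Filter Topology

noncomputable section

/-- The space `D([0,∞),ℝ)` of càdlàg paths. -/
def Dfun : Type := {f : ℝ → ℝ // IsCadlag f}

/-- The Skorokhod `J1` topology on `D([0,∞),ℝ)`, generated by the open balls of the
Skorokhod metric `dJ1`. -/
noncomputable def J1Top : TopologicalSpace Dfun :=
  TopologicalSpace.generateFrom
    {s : Set Dfun | ∃ f : Dfun, ∃ ε : ℝ, 0 < ε ∧ s = {g : Dfun | dJ1 f.1 g.1 < ε}}

/-- The Borel σ-algebra of the Skorokhod `J1` topology on `D([0,∞),ℝ)`. -/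
noncomputable def J1Borel : MeasurableSpace Dfun := @borel Dfun J1Top


namespace OccAux

/-- Composing an arbitrary function with a measurable function having countable range
is measurable. -/
lemma measurable_comp_countable {α : Type*} [MeasurableSpace α]
    {c : α → ℝ} (hc : Measurable c) (hcr : (Set.range c).Countable) (f : ℝ → ℝ) :
    Measurable (fun x => f (c x)) := by
  intro A hA
  have hset : (fun x => f (c x)) ⁻¹' A = ⋃ q ∈ Set.range c ∩ f ⁻¹' A, c ⁻¹' {q} := by
    ext x
    simp only [mem_preimage, mem_iUnion, mem_inter_iff, mem_singleton_iff, exists_prop]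
    constructor
    · intro h; exact ⟨c x, ⟨⟨x, rfl⟩, h⟩, rfl⟩
    · rintro ⟨q, ⟨_, hq⟩, hx⟩; rw [hx]; exact hq
  rw [hset]
  exact MeasurableSet.biUnion (hcr.mono inter_subset_left)
    (fun q _ => hc (measurableSet_singleton q))

/-- The dyadic right approximation of `max t 0`. -/
def dy (n : ℕ) (t : ℝ) : ℝ := ((⌊max t 0 * 2 ^ n⌋ : ℝ) + 1) / 2 ^ n

lemma dy_eq_comp (n : ℕ) :
    dy n = (fun j : ℤ => ((j : ℝ) + 1) / 2 ^ n) ∘ (fun t => ⌊max t 0 * 2 ^ n⌋) := rfl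

lemma measurable_dy (n : ℕ) : Measurable (dy n) := by
  rw [dy_eq_comp]
  exact (measurable_of_countable _).comp
    ((measurable_id.max measurable_const).mul_const _).floor

lemma countable_range_dy (n : ℕ) : (Set.range (dy n)).Countable := by
  rw [dy_eq_comp]
  exact (Set.countable_range (fun j : ℤ => ((j : ℝ) + 1) / 2 ^ n)).mono
    (Set.range_comp_subset_range _ _)

lemma dy_gt (n : ℕ) (t : ℝ) : max t 0 < dy n t := by
  have h2 : (0:ℝ) < 2 ^ n := by positivity
  rw [dy, lt_div_iff₀ h2]
  exact Int.lt_floor_add_one (max t 0 * 2 ^ n)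

lemma dy_pos (n : ℕ) (t : ℝ) : 0 ≤ dy n t :=
  le_of_lt (lt_of_le_of_lt (le_max_right t 0) (dy_gt n t))

lemma dy_le (n : ℕ) (t : ℝ) : dy n t ≤ max t 0 + (2 ^ n)⁻¹ := by
  have h2 : (0:ℝ) < 2 ^ n := by positivity
  rw [dy, div_le_iff₀ h2, add_mul, inv_mul_cancel₀ h2.ne']
  have := Int.floor_le (max t 0 * 2 ^ n)
  linarith

lemma dy_tendsto (t : ℝ) : Tendsto (fun n => dy n t) atTop (𝓝[≥] (max t 0)) := by
  have h1 : Tendsto (fun n : ℕ => max t 0 + (2 ^ n : ℝ)⁻¹) atTop (𝓝 (max t 0)) := by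
    have : Tendsto (fun n : ℕ => ((2:ℝ)⁻¹) ^ n) atTop (𝓝 0) :=
      tendsto_pow_atTop_nhds_zero_of_lt_one (by norm_num) (by norm_num)
    have h2 : Tendsto (fun n : ℕ => ((2:ℝ) ^ n)⁻¹) atTop (𝓝 0) := by
      simpa [inv_pow] using this
    simpa using tendsto_const_nhds.add h2
  have hmain : Tendsto (fun n => dy n t) atTop (𝓝 (max t 0)) :=
    tendsto_of_tendsto_of_tendsto_of_le_of_le tendsto_const_nhds h1
      (fun n => (dy_gt n t).le) (fun n => dy_le n t)
  exact tendsto_nhdsWithin_of_tendsto_nhds_of_eventually_within _ hmain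
    (Eventually.of_forall fun n => (dy_gt n t).le)

/-- `f` shifted to be defined only through nonnegative arguments. -/
def fplus (f : ℝ → ℝ) : ℝ → ℝ := fun t => f (max t 0)

lemma tendsto_dy_eval {f : ℝ → ℝ} (hf : IsCadlag f) (t : ℝ) :
    Tendsto (fun n => f (dy n t)) atTop (𝓝 (fplus f t)) :=
  (hf.1 (max t 0) (le_max_right t 0)).comp (dy_tendsto t)

lemma measurable_fplus {f : ℝ → ℝ} (hf : IsCadlag f) : Measurable (fplus f) :=
  measurable_of_tendsto_metrizable' atTop
    (fun n => measurable_comp_countable (measurable_dy n) (countable_range_dy n) f)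
    (tendsto_pi_nhds.2 (tendsto_dy_eval hf))

/-- Partition property: `[0,b)` can be cut into finitely many pieces on which `f`
oscillates at most `ε` around the left endpoint value. -/
def PartProp (f : ℝ → ℝ) (ε b : ℝ) : Prop :=
  ∃ (n : ℕ) (u : ℕ → ℝ), u 0 = 0 ∧ u n = b ∧ (∀ i < n, u i < u (i + 1)) ∧
    ∀ i < n, ∀ x ∈ Ico (u i) (u (i + 1)), |f x - f (u i)| ≤ ε

lemma partProp_zero (f : ℝ → ℝ) (ε : ℝ) : PartProp f ε 0 :=
  ⟨0, fun _ => 0, rfl, rfl, fun i hi => absurd hi (Nat.not_lt_zero i),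
    fun i hi => absurd hi (Nat.not_lt_zero i)⟩

lemma partProp_extend {f : ℝ → ℝ} {ε b c : ℝ} (hP : PartProp f ε b) (hbc : b < c)
    (hosc : ∀ x ∈ Ico b c, |f x - f b| ≤ ε) : PartProp f ε c := by
  obtain ⟨n, u, hu0, hun, hstep, hoscu⟩ := hP
  refine ⟨n + 1, fun i => if i ≤ n then u i else c, ?_, ?_, ?_, ?_⟩
  · simp [Nat.zero_le n, hu0]
  · simp
  · intro i hi
    dsimp only
    rcases Nat.lt_succ_iff_lt_or_eq.1 hi with hlt | heq
    · rw [if_pos hlt.le, if_pos (Nat.succ_le_of_lt hlt)]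
      exact hstep i hlt
    · subst heq
      rw [if_pos (le_refl i), if_neg (Nat.not_succ_le_self i), hun]
      exact hbc
  · intro i hi x hx
    dsimp only at hx ⊢
    rcases Nat.lt_succ_iff_lt_or_eq.1 hi with hlt | heq
    · rw [if_pos hlt.le, if_pos (Nat.succ_le_of_lt hlt)] at hx
      rw [if_pos hlt.le]
      exact hoscu i hlt x hx
    · subst heq
      rw [if_pos (le_refl i), if_neg (Nat.not_succ_le_self i), hun] at hx
      rw [if_pos (le_refl i), hun]
      exact hosc x hx

/-- Any càdlàg function admits finite partitions of `[0,K)` with small oscillation. -/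
lemma exists_partition {f : ℝ → ℝ} (hf : IsCadlag f) {K ε : ℝ} (hK : 0 < K) (hε : 0 < ε) :
    PartProp f ε K := by
  set S : Set ℝ := {b | b ∈ Icc 0 K ∧ PartProp f ε b} with hS
  have h0S : (0:ℝ) ∈ S := ⟨⟨le_refl 0, hK.le⟩, partProp_zero f ε⟩
  have hbdd : BddAbove S := ⟨K, fun b hb => hb.1.2⟩
  set c := sSup S with hc
  have hc0 : 0 ≤ c := le_csSup hbdd h0S
  have hcK : c ≤ K := csSup_le ⟨0, h0S⟩ (fun b hb => hb.1.2)
  have hPc : PartProp f ε c := by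
    rcases eq_or_lt_of_le hc0 with heq | hpos
    · rw [← heq]; exact partProp_zero f ε
    · obtain ⟨L, hL⟩ := hf.2 c hpos
      have hev : ∀ᶠ x in 𝓝[<] c, dist (f x) L < ε / 2 :=
        Metric.tendsto_nhds.1 hL (ε / 2) (by linarith)
      obtain ⟨l, hl, hIoo⟩ := mem_nhdsLT_iff_exists_Ioo_subset.1 hev
      obtain ⟨b, hbS, hlb⟩ := exists_lt_of_lt_csSup ⟨0, h0S⟩ hl
      have hbc : b ≤ c := le_csSup hbdd hbS
      rcases eq_or_lt_of_le hbc with heq | hblt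
      · rw [← heq]; exact hbS.2
      · refine partProp_extend hbS.2 hblt (fun x hx => ?_)
        have hxIoo : x ∈ Ioo l c := ⟨lt_of_lt_of_le hlb hx.1, hx.2⟩
        have hbIoo : b ∈ Ioo l c := ⟨hlb, hblt⟩
        have h1 := hIoo hxIoo
        have h2 := hIoo hbIoo
        simp only [mem_setOf_eq, Real.dist_eq] at h1 h2
        have h3 := abs_sub_le (f x) L (f b)
        rw [abs_sub_comm L (f b)] at h3
        linarith
  rcases eq_or_lt_of_le hcK with heqK | hltK
  · rw [← heqK]; exact hPc
  · exfalso
    have hev : ∀ᶠ x in 𝓝[≥] c, dist (f x) (f c) < ε / 2 :=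
      Metric.tendsto_nhds.1 (hf.1 c hc0) (ε / 2) (by linarith)
    obtain ⟨w, hw, hIco⟩ := mem_nhdsGE_iff_exists_Ico_subset.1 hev
    set b := min K w with hb
    have hcb : c < b := lt_min hltK hw
    have hPb : PartProp f ε b := by
      refine partProp_extend hPc hcb (fun x hx => ?_)
      have hxI : x ∈ Ico c w := ⟨hx.1, lt_of_lt_of_le hx.2 (min_le_right K w)⟩
      have h1 := hIco hxI
      simp only [mem_setOf_eq, Real.dist_eq] at h1
      linarith
    have : b ≤ c := le_csSup hbdd ⟨⟨le_trans hc0 hcb.le, min_le_left K w⟩, hPb⟩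
    exact absurd hcb (not_lt.2 this)


lemma u_mono {u : ℕ → ℝ} {n : ℕ} (hstep : ∀ i < n, u i < u (i + 1)) :
    ∀ i j, i ≤ j → j ≤ n → u i ≤ u j := by
  intro i j hij hjn
  induction j with
  | zero => rw [Nat.le_zero.1 hij]
  | succ k ih =>
    rcases Nat.le_succ_iff.1 hij with h | h
    · exact le_trans (ih h (le_trans (Nat.le_succ k) hjn))
        (hstep k (Nat.lt_of_succ_le hjn)).le
    · rw [h]

lemma exists_piece {u : ℕ → ℝ} {n : ℕ} {K : ℝ} (hu0 : u 0 = 0) (hun : u n = K)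
    (hstep : ∀ i < n, u i < u (i + 1)) {x : ℝ} (hx : x ∈ Ico (0:ℝ) K) :
    ∃ i < n, x ∈ Ico (u i) (u (i + 1)) := by
  classical
  set P : ℕ → Prop := fun j => u j ≤ x with hP
  set i := Nat.findGreatest P n with hi
  have hP0 : P 0 := by rw [hP]; simp [hu0, hx.1]
  have hPi : P i := Nat.findGreatest_spec (Nat.zero_le n) hP0
  have hin : i ≤ n := Nat.findGreatest_le n
  have hiltn : i < n := by
    rcases lt_or_eq_of_le hin with h | h
    · exact h
    · exfalso
      have : u i ≤ x := hPi
      rw [h, hun] at this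
      exact absurd hx.2 (not_lt.2 this)
  refine ⟨i, hiltn, hPi, ?_⟩
  have := Nat.findGreatest_is_greatest (Nat.lt_succ_self i) (Nat.succ_le_of_lt hiltn)
  exact not_le.1 this

/-- A càdlàg function is bounded on `[0,K]`. -/
lemma bounded_of_cadlag {f : ℝ → ℝ} (hf : IsCadlag f) {K : ℝ} (hK : 0 < K) :
    ∃ M : ℝ, 0 ≤ M ∧ ∀ x ∈ Icc (0:ℝ) K, |f x| ≤ M := by
  obtain ⟨n, u, hu0, hun, hstep, hosc⟩ := exists_partition hf hK one_pos
  have hne : (Finset.range (n + 1)).Nonempty := ⟨0, Finset.mem_range.2 (Nat.succ_pos n)⟩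
  set M₀ := (Finset.range (n + 1)).sup' hne (fun i => |f (u i)|) with hM₀
  have hM₀0 : 0 ≤ M₀ := le_trans (abs_nonneg (f (u 0)))
    (Finset.le_sup' (fun i => |f (u i)|) (Finset.mem_range.2 (Nat.succ_pos n)))
  refine ⟨M₀ + 1 + |f K|, by positivity, fun x hx => ?_⟩
  rcases lt_or_eq_of_le hx.2 with hlt | heq
  · obtain ⟨i, hin, hxi⟩ := exists_piece hu0 hun hstep ⟨hx.1, hlt⟩
    have h1 := hosc i hin x hxi
    have h2 : |f (u i)| ≤ M₀ :=
      Finset.le_sup' (fun i => |f (u i)|) (Finset.mem_range.2 (Nat.lt_succ_of_lt hin))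
    have h3 := abs_sub_abs_le_abs_sub (f x) (f (u i))
    have h4 : (0:ℝ) ≤ |f K| := abs_nonneg _
    linarith
  · rw [heq]
    have h4 : (0:ℝ) ≤ M₀ + 1 := by linarith
    linarith [le_refl |f K|]

/-- Integrability of a càdlàg function over nonneg compact intervals. -/
lemma intervalIntegrable_of_cadlag {f : ℝ → ℝ} (hf : IsCadlag f) {a b : ℝ}
    (ha : 0 ≤ a) (hab : a ≤ b) : IntervalIntegrable f volume a b := by
  rw [intervalIntegrable_iff, uIoc_of_le hab]
  rcases eq_or_lt_of_le hab with heq | hlt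
  · rw [heq]; simp
  obtain ⟨M, hM0, hM⟩ := bounded_of_cadlag hf (lt_of_le_of_lt ha hlt)
  have heqset : EqOn (fplus f) f (Ioc a b) := fun x hx =>
    by rw [fplus, max_eq_left (le_trans ha hx.1.le)]
  refine IntegrableOn.congr_fun ?_ heqset measurableSet_Ioc
  refine Measure.integrableOn_of_bounded (M := M) measure_Ioc_lt_top.ne
    (measurable_fplus hf).aestronglyMeasurable ?_
  filter_upwards [ae_restrict_mem measurableSet_Ioc] with x hx
  rw [Real.norm_eq_abs, fplus, max_eq_left (le_trans ha hx.1.le)]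
  exact hM x ⟨le_trans ha hx.1.le, hx.2⟩


lemma dJ1T_nonneg (T : ℝ) (f g : ℝ → ℝ) : 0 ≤ dJ1T T f g :=
  Real.sInf_nonneg (fun _ hr => hr.1)

lemma isTimeChange_id (T : ℝ) : IsTimeChange T id :=
  ⟨continuousOn_id, strictMonoOn_id, rfl, rfl⟩

lemma dJ1T_self (T : ℝ) (f : ℝ → ℝ) : dJ1T T f f = 0 := by
  have hmem : (0:ℝ) ∈ {r : ℝ | 0 ≤ r ∧ ∃ γ : ℝ → ℝ, IsTimeChange T γ ∧
      (∀ t ∈ Icc (0:ℝ) T, |γ t - t| ≤ r) ∧ (∀ t ∈ Icc (0:ℝ) T, |f (γ t) - f t| ≤ r)} :=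
    ⟨le_refl 0, id, isTimeChange_id T, fun t _ => by simp, fun t _ => by simp⟩
  exact le_antisymm (csInf_le ⟨0, fun r hr => hr.1⟩ hmem)
    (le_csInf ⟨0, hmem⟩ (fun r hr => hr.1))

lemma summable_dJ1 (f g : ℝ → ℝ) :
    Summable (fun m : ℕ => (2:ℝ)⁻¹ ^ (m + 1) *
      min 1 (dJ1T ((m:ℝ) + 1) (restrictD ((m:ℝ) + 1) f) (restrictD ((m:ℝ) + 1) g))) := by
  have hgeo : Summable (fun m : ℕ => (2:ℝ)⁻¹ ^ (m + 1)) := by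
    have := (summable_geometric_of_lt_one (r := (2:ℝ)⁻¹) (by norm_num) (by norm_num)).mul_left
      (2:ℝ)⁻¹
    simpa [pow_succ, mul_comm] using this
  refine Summable.of_nonneg_of_le (fun m => ?_) (fun m => ?_) hgeo
  · exact mul_nonneg (by positivity) (le_min zero_le_one (dJ1T_nonneg _ _ _))
  · exact mul_le_of_le_one_right (by positivity) (min_le_left _ _)

lemma dJ1_self (f : ℝ → ℝ) : dJ1 f f = 0 := by
  have h : ∀ m : ℕ, (2:ℝ)⁻¹ ^ (m + 1) *
      min 1 (dJ1T ((m:ℝ) + 1) (restrictD ((m:ℝ) + 1) f) (restrictD ((m:ℝ) + 1) f)) = 0 := by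
    intro m
    rw [dJ1T_self]
    simp
  calc dJ1 f f = ∑' _ : ℕ, (0:ℝ) := tsum_congr h
  _ = 0 := tsum_zero

lemma dJ1_term_le (f g : ℝ → ℝ) (m : ℕ) :
    (2:ℝ)⁻¹ ^ (m + 1) *
      min 1 (dJ1T ((m:ℝ) + 1) (restrictD ((m:ℝ) + 1) f) (restrictD ((m:ℝ) + 1) g)) ≤
      dJ1 f g :=
  Summable.le_tsum (summable_dJ1 f g) m
    (fun _ _ => mul_nonneg (by positivity) (le_min zero_le_one (dJ1T_nonneg _ _ _)))

lemma restrictD_bound {f : ℝ → ℝ} {T M : ℝ} (hT : 1 ≤ T)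
    (hM : ∀ x ∈ Icc (0:ℝ) T, |f x| ≤ M) :
    ∀ x ∈ Icc (0:ℝ) T, |restrictD T f x| ≤ M := by
  intro x hx
  rw [restrictD]
  split_ifs with h
  · exact hM x hx
  · push_neg at h
    have h1 : |T - x| ≤ 1 := by
      rw [abs_of_nonneg (by linarith [hx.2])]
      linarith
    rw [abs_mul]
    calc |T - x| * |f x| ≤ 1 * |f x| := mul_le_mul_of_nonneg_right h1 (abs_nonneg _)
    _ = |f x| := one_mul _
    _ ≤ M := hM x hx

lemma restrictD_eq {f : ℝ → ℝ} {T x : ℝ} (hx : x ≤ T - 1) : restrictD T f x = f x :=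
  if_pos hx

/-- Extraction of a good time change from a small `dJ1` distance. -/
lemma exists_gamma {f g : ℝ → ℝ} (hfC : IsCadlag f) (hgC : IsCadlag g) (k : ℕ) {δ' : ℝ}
    (hδ : 0 < δ') (hδ1 : δ' ≤ 1) (hlt : dJ1 f g < (2:ℝ)⁻¹ ^ (k + 1) * δ') :
    ∃ γ : ℝ → ℝ, IsTimeChange ((k:ℝ) + 1) γ ∧
      (∀ t ∈ Icc (0:ℝ) ((k:ℝ) + 1), |γ t - t| ≤ δ') ∧
      (∀ t ∈ Icc (0:ℝ) ((k:ℝ) + 1),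
        |restrictD ((k:ℝ) + 1) f (γ t) - restrictD ((k:ℝ) + 1) g t| ≤ δ') := by
  set T : ℝ := (k:ℝ) + 1 with hTdef
  have hT1 : 1 ≤ T := by rw [hTdef]; have : (0:ℝ) ≤ (k:ℝ) := Nat.cast_nonneg k; linarith
  have hT0 : 0 < T := lt_of_lt_of_le one_pos hT1
  set F := restrictD T f with hF
  set G := restrictD T g with hG
  -- the defining set is nonempty
  obtain ⟨Mf, hMf0, hMf⟩ := bounded_of_cadlag hfC hT0
  obtain ⟨Mg, hMg0, hMg⟩ := bounded_of_cadlag hgC hT0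
  have hFb := restrictD_bound hT1 hMf
  have hGb := restrictD_bound hT1 hMg
  set S := {r : ℝ | 0 ≤ r ∧ ∃ γ : ℝ → ℝ, IsTimeChange T γ ∧
      (∀ t ∈ Icc (0:ℝ) T, |γ t - t| ≤ r) ∧ (∀ t ∈ Icc (0:ℝ) T, |F (γ t) - G t| ≤ r)} with hS
  have hmem : Mf + Mg ∈ S := by
    refine ⟨by linarith, id, isTimeChange_id T, fun t _ => by simp; linarith, fun t ht => ?_⟩
    calc |F (id t) - G t| ≤ |F t| + |G t| := by rw [id_eq]; exact abs_sub _ _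
    _ ≤ Mf + Mg := add_le_add (hFb t ht) (hGb t ht)
  -- the inf is small
  have hpow : (0:ℝ) < (2:ℝ)⁻¹ ^ (k + 1) := by positivity
  have h1 : min 1 (dJ1T T F G) < δ' := by
    have h2 := dJ1_term_le f g k
    have h3 : (2:ℝ)⁻¹ ^ (k + 1) * min 1 (dJ1T T F G) < (2:ℝ)⁻¹ ^ (k + 1) * δ' := by
      exact lt_of_le_of_lt h2 hlt
    exact lt_of_mul_lt_mul_left h3 hpow.le
  have hdlt : dJ1T T F G < δ' := by
    by_contra hcon
    push_neg at hcon
    have : δ' ≤ min 1 (dJ1T T F G) := le_min hδ1 hcon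
    exact absurd h1 (not_lt.2 this)
  have hinf : sInf S < δ' := hdlt
  obtain ⟨r, hrS, hrδ⟩ := exists_lt_of_csInf_lt ⟨Mf + Mg, hmem⟩ hinf
  obtain ⟨hr0, γ, htc, hγ1, hγ2⟩ := hrS
  exact ⟨γ, htc, fun t ht => (hγ1 t ht).trans hrδ.le, fun t ht => (hγ2 t ht).trans hrδ.le⟩

lemma intervalIntegrable_indicator {a b : ℝ} {s : Set ℝ} (hs : MeasurableSet s) (c : ℝ) :
    IntervalIntegrable (s.indicator (fun _ => c)) volume a b := by
  rw [intervalIntegrable_iff]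
  refine Measure.integrableOn_of_bounded (M := |c|) ?_ ?_ ?_
  · rw [uIoc]; exact measure_Ioc_lt_top.ne
  · exact (measurable_const.indicator hs).aestronglyMeasurable
  · refine Eventually.of_forall (fun x => ?_)
    rw [Real.norm_eq_abs]
    by_cases hx : x ∈ s <;> simp [indicator_of_mem, indicator_of_notMem, hx, le_refl, abs_nonneg]

lemma integral_indicator_le {s h p q M : ℝ} (hh : 0 ≤ h) (hM : 0 ≤ M) (hpq : p ≤ q) :
    ∫ t in s..(s + h), (Icc p q).indicator (fun _ => M) t ≤ M * (q - p) := by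
  rw [intervalIntegral.integral_of_le (by linarith : s ≤ s + h),
    setIntegral_indicator measurableSet_Icc, setIntegral_const]
  have h1 : volume (Ioc s (s + h) ∩ Icc p q) ≤ volume (Icc p q) :=
    measure_mono inter_subset_right
  rw [Real.volume_Icc] at h1
  have h2 : (volume (Ioc s (s + h) ∩ Icc p q)).toReal ≤ q - p :=
    ENNReal.toReal_le_of_le_ofReal (by linarith) h1
  rw [smul_eq_mul, mul_comm]
  exact mul_le_mul_of_nonneg_left h2 hM

lemma integral_indicator_nonneg {s h p q M : ℝ} (hh : 0 ≤ h) (hM : 0 ≤ M) :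
    0 ≤ ∫ t in s..(s + h), (Icc p q).indicator (fun _ => M) t := by
  refine intervalIntegral.integral_nonneg (by linarith) (fun x _ => ?_)
  exact indicator_nonneg (fun _ _ => hM) x

/-- Integrability of a bounded measurable function composed with a continuous-on time change. -/
lemma integrableOn_comp_gamma {γ : ℝ → ℝ} {T a b : ℝ} (hγ : ContinuousOn γ (Icc 0 T))
    (hsub : Ioc a b ⊆ Icc 0 T) {F : ℝ → ℝ} (hF : Measurable F) {M : ℝ}
    (hbd : ∀ t ∈ Ioc a b, |F (γ t)| ≤ M) :
    IntegrableOn (fun t => F (γ t)) (Ioc a b) volume := by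
  have hγae : AEMeasurable γ (volume.restrict (Ioc a b)) :=
    (hγ.mono hsub).aemeasurable measurableSet_Ioc
  have hconst : IntegrableOn (fun _ : ℝ => M) (Ioc a b) volume :=
    integrableOn_const measure_Ioc_lt_top.ne
  refine Integrable.mono' hconst (hF.comp_aemeasurable hγae).aestronglyMeasurable ?_
  filter_upwards [ae_restrict_mem measurableSet_Ioc] with t ht
  rw [Real.norm_eq_abs]
  exact hbd t ht

/-- Per-piece estimate: the integral of an indicator pre-composed with a near-identity map
changes little. -/
lemma piece_est {γ : ℝ → ℝ} {s h δ' a b c : ℝ} (hh : 0 ≤ h) (hδ : 0 ≤ δ')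
    (hγd : ∀ t ∈ Icc s (s + h), |γ t - t| ≤ δ')
    (hint : IntervalIntegrable (fun t => (Ico a b).indicator (fun _ => c) (γ t)) volume s (s + h)) :
    |∫ t in s..(s + h), ((Ico a b).indicator (fun _ => c) (γ t)
        - (Ico a b).indicator (fun _ => c) t)| ≤ 4 * δ' * |c| := by
  set ψ : ℝ → ℝ := fun t => (Icc (a - δ') (a + δ')).indicator (fun _ => |c|) t
      + (Icc (b - δ') (b + δ')).indicator (fun _ => |c|) t with hψ
  have hψint : IntervalIntegrable ψ volume s (s + h) :=
    (intervalIntegrable_indicator measurableSet_Icc |c|).add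
      (intervalIntegrable_indicator measurableSet_Icc |c|)
  have hIsub : Set.uIoc s (s + h) ⊆ Icc s (s + h) := by
    rw [uIoc_of_le (by linarith : s ≤ s + h)]
    exact Ioc_subset_Icc_self
  have hae : ∀ᵐ t ∂(volume.restrict (Set.uIoc s (s + h))),
      ‖(Ico a b).indicator (fun _ => c) (γ t) - (Ico a b).indicator (fun _ => c) t‖ ≤ ψ t := by
    filter_upwards [ae_restrict_mem measurableSet_uIoc] with t ht
    have htI := hIsub ht
    have hd := abs_le.1 (hγd t htI)
    have hn1 : (0:ℝ) ≤ (Icc (a - δ') (a + δ')).indicator (fun _ => |c|) t :=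
      indicator_nonneg (fun _ _ => abs_nonneg c) t
    have hn2 : (0:ℝ) ≤ (Icc (b - δ') (b + δ')).indicator (fun _ => |c|) t :=
      indicator_nonneg (fun _ _ => abs_nonneg c) t
    rw [Real.norm_eq_abs]
    by_cases h1 : γ t ∈ Ico a b <;> by_cases h2 : t ∈ Ico a b
    · rw [indicator_of_mem h1, indicator_of_mem h2, sub_self, abs_zero, hψ]
      dsimp only
      linarith
    · rw [indicator_of_mem h1, indicator_of_notMem h2, sub_zero]
      have hmem : t ∈ Icc (a - δ') (a + δ') ∨ t ∈ Icc (b - δ') (b + δ') := by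
        rw [mem_Ico] at h1 h2
        push_neg at h2
        by_cases hta : t < a
        · left
          constructor
          · linarith [h1.1]
          · linarith
        · right
          push_neg at hta
          have hbt : b ≤ t := h2 hta
          constructor
          · linarith
          · linarith [h1.2]
      rcases hmem with hm | hm
      · rw [hψ]; dsimp only; rw [indicator_of_mem hm]; linarith
      · rw [hψ]; dsimp only; rw [indicator_of_mem hm]; linarith
    · rw [indicator_of_notMem h1, indicator_of_mem h2, zero_sub, abs_neg]
      have hmem : t ∈ Icc (a - δ') (a + δ') ∨ t ∈ Icc (b - δ') (b + δ') := by
        rw [mem_Ico] at h1 h2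
        push_neg at h1
        by_cases hta : γ t < a
        · left
          constructor
          · linarith [h2.1]
          · linarith
        · right
          push_neg at hta
          have hbt : b ≤ γ t := h1 hta
          constructor
          · linarith
          · linarith [h2.2]
      rcases hmem with hm | hm
      · rw [hψ]; dsimp only; rw [indicator_of_mem hm]; linarith
      · rw [hψ]; dsimp only; rw [indicator_of_mem hm]; linarith
    · rw [indicator_of_notMem h1, indicator_of_notMem h2, sub_self, abs_zero, hψ]
      dsimp only
      linarith
  have key := intervalIntegral.norm_integral_le_abs_of_norm_le hae hψint
  rw [Real.norm_eq_abs] at key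
  have hψsplit : ∫ t in s..(s + h), ψ t
      = (∫ t in s..(s + h), (Icc (a - δ') (a + δ')).indicator (fun _ => |c|) t)
      + ∫ t in s..(s + h), (Icc (b - δ') (b + δ')).indicator (fun _ => |c|) t :=
    intervalIntegral.integral_add (intervalIntegrable_indicator measurableSet_Icc |c|)
      (intervalIntegrable_indicator measurableSet_Icc |c|)
  have hb1 := integral_indicator_le (s := s) (h := h) (p := a - δ') (q := a + δ') hh (abs_nonneg c) (by linarith)
  have hb2 := integral_indicator_le (s := s) (h := h) (p := b - δ') (q := b + δ') hh (abs_nonneg c) (by linarith)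
  have hn1 := integral_indicator_nonneg (s := s) (h := h) (p := a - δ') (q := a + δ') (M := |c|) hh (abs_nonneg c)
  have hn2 := integral_indicator_nonneg (s := s) (h := h) (p := b - δ') (q := b + δ') (M := |c|) hh (abs_nonneg c)
  have hψval : |∫ t in s..(s + h), ψ t| ≤ 4 * δ' * |c| := by
    rw [hψsplit, abs_of_nonneg (by linarith)]
    have : a + δ' - (a - δ') = 2 * δ' := by ring
    rw [this] at hb1
    have : b + δ' - (b - δ') = 2 * δ' := by ring
    rw [this] at hb2
    nlinarith [abs_nonneg c]
  exact le_trans key hψval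

set_option maxHeartbeats 1000000 in
/-- Key quantitative continuity estimate for the windowed integral functional. -/
lemma phi_est (f : ℝ → ℝ) (hfC : IsCadlag f) {s h ε : ℝ} (hs : 0 ≤ s) (hh : 0 < h)
    (hε : 0 < ε) :
    ∃ δ > 0, ∀ g : ℝ → ℝ, IsCadlag g → dJ1 f g < δ →
      |(∫ t in s..(s + h), g t) - ∫ t in s..(s + h), f t| ≤ ε := by
  classical
  set k : ℕ := ⌈s + h + 1⌉₊ with hk
  have hk1 : s + h + 1 ≤ (k : ℝ) := Nat.le_ceil _
  set T : ℝ := (k : ℝ) + 1 with hT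
  set K : ℝ := (k : ℝ) with hKdef
  have hK0 : 0 < K := lt_of_lt_of_le (by linarith) hk1
  have hT0 : 0 < T := by rw [hT]; positivity
  have hTK : T - 1 = K := by rw [hT, hKdef]; ring
  have hshK : s + h + 1 ≤ K := hk1
  -- partition of f on [0,K)
  set ε₁ : ℝ := ε / (4 * (h + 1)) with hε₁
  have hε₁0 : 0 < ε₁ := by positivity
  obtain ⟨n, u, hu0, hun, hstep, hosc⟩ := exists_partition hfC hK0 hε₁0
  have humono := u_mono hstep
  -- step function approximation
  set σ : ℝ → ℝ := fun x => ∑ i ∈ Finset.range n,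
    (Ico (u i) (u (i + 1))).indicator (fun _ => f (u i)) x with hσ
  have hσapprox : ∀ x ∈ Ico (0:ℝ) K, |f x - σ x| ≤ ε₁ := by
    intro x hx
    obtain ⟨i, hin, hxi⟩ := exists_piece hu0 hun hstep hx
    have hcollapse : σ x = f (u i) := by
      rw [hσ]
      dsimp only
      rw [Finset.sum_eq_single_of_mem i (Finset.mem_range.2 hin)
        (fun j hj hji => indicator_of_notMem (by
          rcases lt_or_gt_of_ne hji with hlt | hgt
          · intro hmem
            have hle : u (j + 1) ≤ u i := humono (j + 1) i hlt hin.le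
            exact absurd hmem.2 (not_lt.2 (le_trans hle hxi.1))
          · intro hmem
            have hle : u (i + 1) ≤ u j := humono (i + 1) j hgt (Finset.mem_range.1 hj).le
            exact absurd hmem.1 (not_le.2 (lt_of_lt_of_le hxi.2 hle))) _)]
      exact indicator_of_mem hxi _
    rw [hcollapse]
    exact hosc i hin x hxi
  -- constants
  set C : ℝ := ∑ i ∈ Finset.range n, |f (u i)| with hC
  have hC0 : 0 ≤ C := Finset.sum_nonneg (fun i _ => abs_nonneg _)
  set δ' : ℝ := min (1 / 2) (min (ε / (4 * (h + 1))) (ε / (16 * (C + 1)))) with hδ'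
  have hδ'0 : 0 < δ' := by
    refine lt_min (by norm_num) (lt_min (by positivity) (by positivity))
  have hδ'half : δ' ≤ 1 / 2 := min_le_left _ _
  have hδ'1 : δ' ≤ 1 := le_trans hδ'half (by norm_num)
  have h4 : δ' * (4 * (h + 1)) ≤ ε := by
    have h1 : δ' ≤ ε / (4 * (h + 1)) := by
      rw [hδ']
      exact le_trans (min_le_right _ _) (min_le_left _ _)
    exact (le_div_iff₀ (by positivity)).1 h1
  have h16 : δ' * (16 * (C + 1)) ≤ ε := by
    have h1 : δ' ≤ ε / (16 * (C + 1)) := by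
      rw [hδ']
      exact le_trans (min_le_right _ _) (min_le_right _ _)
    exact (le_div_iff₀ (by positivity)).1 h1
  refine ⟨(2:ℝ)⁻¹ ^ (k + 1) * δ', by positivity, fun g hgC hdlt => ?_⟩
  obtain ⟨γ, htc, hγ1, hγ2⟩ := exists_gamma hfC hgC k hδ'0 hδ'1 hdlt
  obtain ⟨hγcont, hγmono, hγ0, hγT⟩ := htc
  -- basic containments
  have hsub : Icc s (s + h) ⊆ Icc (0:ℝ) T := fun t ht =>
    ⟨le_trans hs ht.1, by rw [hT]; linarith [ht.2]⟩
  have hsubIoc : Ioc s (s + h) ⊆ Icc (0:ℝ) T := fun t ht => hsub (Ioc_subset_Icc_self ht)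
  have hγfacts : ∀ t ∈ Icc s (s + h), 0 ≤ γ t ∧ γ t < K := by
    intro t ht
    have htT : t ∈ Icc (0:ℝ) T := hsub ht
    have h0T : (0:ℝ) ∈ Icc (0:ℝ) T := ⟨le_refl 0, hT0.le⟩
    have hγpos : 0 ≤ γ t := by
      have := hγmono.monotoneOn h0T htT htT.1
      rw [hγ0] at this
      exact this
    have hup := (abs_le.1 (hγ1 t htT)).2
    exact ⟨hγpos, by linarith [ht.2, hδ'half]⟩
  -- values of restrictD agree with the functions
  have hFγ : ∀ t ∈ Icc s (s + h), restrictD T f (γ t) = f (γ t) := by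
    intro t ht
    exact restrictD_eq (by rw [hTK]; exact (hγfacts t ht).2.le)
  have hGt : ∀ t ∈ Icc s (s + h), restrictD T g t = g t := by
    intro t ht
    exact restrictD_eq (by rw [hTK]; linarith [ht.2])
  have hsle : s ≤ s + h := by linarith
  have hIsub : Set.uIoc s (s + h) ⊆ Icc s (s + h) := by
    rw [uIoc_of_le hsle]; exact Ioc_subset_Icc_self
  -- bound for f
  obtain ⟨Mf, hMf0, hMf⟩ := bounded_of_cadlag hfC hT0
  -- integrability facts
  have Ig : IntervalIntegrable g volume s (s + h) := intervalIntegrable_of_cadlag hgC hs hsle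
  have If : IntervalIntegrable f volume s (s + h) := intervalIntegrable_of_cadlag hfC hs hsle
  have hγIcc : ∀ t ∈ Ioc s (s + h), γ t ∈ Icc (0:ℝ) T := by
    intro t ht
    have h1 := hγfacts t (Ioc_subset_Icc_self ht)
    exact ⟨h1.1, by rw [hT]; linarith [h1.2]⟩
  have Ifγ : IntervalIntegrable (fun t => f (γ t)) volume s (s + h) := by
    rw [intervalIntegrable_iff, uIoc_of_le hsle]
    have heq : EqOn (fun t => fplus f (γ t)) (fun t => f (γ t)) (Ioc s (s + h)) := by
      intro t ht
      dsimp only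
      rw [fplus, max_eq_left (hγfacts t (Ioc_subset_Icc_self ht)).1]
    refine IntegrableOn.congr_fun ?_ heq measurableSet_Ioc
    refine integrableOn_comp_gamma hγcont hsubIoc (measurable_fplus hfC) (M := Mf) ?_
    intro t ht
    rw [fplus, max_eq_left (hγfacts t (Ioc_subset_Icc_self ht)).1]
    exact hMf _ (hγIcc t ht)
  have Iindγ : ∀ i ∈ Finset.range n, IntervalIntegrable
      (fun t => (Ico (u i) (u (i + 1))).indicator (fun _ => f (u i)) (γ t)) volume s (s + h) := by
    intro i _
    rw [intervalIntegrable_iff, uIoc_of_le hsle]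
    refine integrableOn_comp_gamma hγcont hsubIoc
      (measurable_const.indicator measurableSet_Ico) (M := |f (u i)|) ?_
    intro t _
    by_cases hm : γ t ∈ Ico (u i) (u (i + 1))
    · rw [indicator_of_mem hm]
    · rw [indicator_of_notMem hm, abs_zero]; exact abs_nonneg _
  have Iind : ∀ i ∈ Finset.range n, IntervalIntegrable
      ((Ico (u i) (u (i + 1))).indicator (fun _ => f (u i))) volume s (s + h) :=
    fun i _ => intervalIntegrable_indicator measurableSet_Ico _
  have Iσγ : IntervalIntegrable (fun t => σ (γ t)) volume s (s + h) := by
    have hfe : (fun t => σ (γ t)) = ∑ i ∈ Finset.range n,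
        (fun t => (Ico (u i) (u (i + 1))).indicator (fun _ => f (u i)) (γ t)) := by
      funext t
      rw [hσ]
      simp
    rw [hfe]
    exact IntervalIntegrable.sum _ Iindγ
  have Iσ : IntervalIntegrable σ volume s (s + h) := by
    have hfe : σ = ∑ i ∈ Finset.range n,
        (Ico (u i) (u (i + 1))).indicator (fun _ => f (u i)) := by
      funext t
      rw [hσ]
      simp
    rw [hfe]
    exact IntervalIntegrable.sum _ Iind
  -- the five integrals
  set a1 := ∫ t in s..(s + h), g t with ha1
  set a2 := ∫ t in s..(s + h), f (γ t) with ha2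
  set a3 := ∫ t in s..(s + h), σ (γ t) with ha3
  set a4 := ∫ t in s..(s + h), σ t with ha4
  set a5 := ∫ t in s..(s + h), f t with ha5
  have habs : |a1 - a5| ≤ |a1 - a2| + |a2 - a3| + |a3 - a4| + |a4 - a5| := by
    have t1 := abs_sub_le a1 a2 a5
    have t2 := abs_sub_le a2 a3 a5
    have t3 := abs_sub_le a3 a4 a5
    linarith
  -- bound |a1 - a2|
  have hb1 : |a1 - a2| ≤ ε / 4 := by
    have hdiff : a1 - a2 = ∫ t in s..(s + h), (g t - f (γ t)) :=
      (intervalIntegral.integral_sub Ig Ifγ).symm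
    have hle : |a1 - a2| ≤ δ' * |s + h - s| := by
      rw [hdiff, ← Real.norm_eq_abs]
      refine intervalIntegral.norm_integral_le_of_norm_le_const (fun x hx => ?_)
      have hxI := hIsub hx
      have h2 := hγ2 x (hsub hxI)
      rw [hFγ x hxI, hGt x hxI] at h2
      rw [Real.norm_eq_abs, abs_sub_comm]
      exact h2
    have hsimp : |s + h - s| = h := by rw [add_sub_cancel_left, abs_of_pos hh]
    rw [hsimp] at hle
    refine le_trans hle ?_
    nlinarith [mul_nonneg hδ'0.le hh.le, hδ'0.le]
  -- bound |a2 - a3|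
  have hεh : ε₁ * h ≤ ε / 4 := by
    have : ε₁ * (4 * (h + 1)) = ε := by rw [hε₁]; field_simp
    nlinarith [mul_nonneg hε₁0.le hh.le, hε₁0.le]
  have hb2 : |a2 - a3| ≤ ε / 4 := by
    have hdiff : a2 - a3 = ∫ t in s..(s + h), (f (γ t) - σ (γ t)) :=
      (intervalIntegral.integral_sub Ifγ Iσγ).symm
    have hle : |a2 - a3| ≤ ε₁ * |s + h - s| := by
      rw [hdiff, ← Real.norm_eq_abs]
      refine intervalIntegral.norm_integral_le_of_norm_le_const (fun x hx => ?_)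
      have hxI := hIsub hx
      rw [Real.norm_eq_abs]
      exact hσapprox (γ x) ⟨(hγfacts x hxI).1, (hγfacts x hxI).2⟩
    have hsimp : |s + h - s| = h := by rw [add_sub_cancel_left, abs_of_pos hh]
    rw [hsimp] at hle
    exact le_trans hle hεh
  -- bound |a3 - a4|
  have hb3 : |a3 - a4| ≤ ε / 4 := by
    have hsplit1 : a3 = ∑ i ∈ Finset.range n,
        ∫ t in s..(s + h), (Ico (u i) (u (i + 1))).indicator (fun _ => f (u i)) (γ t) := by
      rw [ha3, hσ]
      exact intervalIntegral.integral_finset_sum Iindγ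
    have hsplit2 : a4 = ∑ i ∈ Finset.range n,
        ∫ t in s..(s + h), (Ico (u i) (u (i + 1))).indicator (fun _ => f (u i)) t := by
      rw [ha4, hσ]
      exact intervalIntegral.integral_finset_sum Iind
    have hre : a3 - a4 = ∑ i ∈ Finset.range n,
        ∫ t in s..(s + h), ((Ico (u i) (u (i + 1))).indicator (fun _ => f (u i)) (γ t)
          - (Ico (u i) (u (i + 1))).indicator (fun _ => f (u i)) t) := by
      rw [hsplit1, hsplit2, ← Finset.sum_sub_distrib]
      refine Finset.sum_congr rfl (fun i hi => ?_)
      exact (intervalIntegral.integral_sub (Iindγ i hi) (Iind i hi)).symm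
    rw [hre]
    have hbd : |∑ i ∈ Finset.range n,
        ∫ t in s..(s + h), ((Ico (u i) (u (i + 1))).indicator (fun _ => f (u i)) (γ t)
          - (Ico (u i) (u (i + 1))).indicator (fun _ => f (u i)) t)|
        ≤ ∑ i ∈ Finset.range n, (4 * δ' * |f (u i)|) := by
      refine le_trans (Finset.abs_sum_le_sum_abs _ _) (Finset.sum_le_sum (fun i hi => ?_))
      refine piece_est hh.le hδ'0.le (fun t ht => hγ1 t (hsub ht)) (Iindγ i hi)
    refine le_trans hbd ?_
    have hsum : ∑ i ∈ Finset.range n, (4 * δ' * |f (u i)|) = 4 * δ' * C := by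
      rw [hC, Finset.mul_sum]
    rw [hsum]
    nlinarith [mul_nonneg hδ'0.le hC0, hδ'0.le]
  -- bound |a4 - a5|
  have hb4 : |a4 - a5| ≤ ε / 4 := by
    have hdiff : a4 - a5 = ∫ t in s..(s + h), (σ t - f t) :=
      (intervalIntegral.integral_sub Iσ If).symm
    have hle : |a4 - a5| ≤ ε₁ * |s + h - s| := by
      rw [hdiff, ← Real.norm_eq_abs]
      refine intervalIntegral.norm_integral_le_of_norm_le_const (fun x hx => ?_)
      have hxI := hIsub hx
      rw [Real.norm_eq_abs, abs_sub_comm]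
      exact hσapprox x ⟨le_trans hs hxI.1, by linarith [hxI.2]⟩
    have hsimp : |s + h - s| = h := by rw [add_sub_cancel_left, abs_of_pos hh]
    rw [hsimp] at hle
    exact le_trans hle hεh
  linarith

lemma isOpen_ball (f : Dfun) {δ : ℝ} (hδ : 0 < δ) :
    IsOpen[J1Top] {g : Dfun | dJ1 f.1 g.1 < δ} :=
  TopologicalSpace.isOpen_generateFrom_of_mem ⟨f, δ, hδ, rfl⟩

lemma phi_cont {s h : ℝ} (hs : 0 ≤ s) (hh : 0 < h) :
    @Continuous Dfun ℝ J1Top _ (fun f : Dfun => ∫ t in s..(s + h), f.1 t) := by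
  letI : TopologicalSpace Dfun := J1Top
  rw [continuous_iff_continuousAt]
  intro f
  rw [ContinuousAt, Metric.tendsto_nhds]
  intro ε hε
  obtain ⟨δ, hδ0, hδ⟩ := phi_est f.1 f.2 hs hh (half_pos hε)
  have hmemf : f ∈ {g : Dfun | dJ1 f.1 g.1 < δ} := by
    simp only [mem_setOf_eq, dJ1_self]
    exact hδ0
  have hball : {g : Dfun | dJ1 f.1 g.1 < δ} ∈ 𝓝 f := (isOpen_ball f hδ0).mem_nhds hmemf
  filter_upwards [hball] with g hg
  rw [Real.dist_eq]
  exact lt_of_le_of_lt (hδ g.1 g.2 hg) (half_lt_self hε)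

lemma avg_tendsto {f : ℝ → ℝ} (hf : IsCadlag f) {q : ℝ} (hq : 0 ≤ q) :
    Tendsto (fun n : ℕ => ((n:ℝ) + 1) * ∫ t in q..(q + ((n:ℝ) + 1)⁻¹), f t) atTop
      (𝓝 (f q)) := by
  rw [Metric.tendsto_atTop]
  intro ε hε
  have hev : ∀ᶠ x in 𝓝[≥] q, dist (f x) (f q) < ε / 2 :=
    Metric.tendsto_nhds.1 (hf.1 q hq) _ (by linarith)
  obtain ⟨w, hw, hIco⟩ := mem_nhdsGE_iff_exists_Ico_subset.1 hev
  have hwq : 0 < w - q := by simp only [mem_Ioi] at hw; linarith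
  obtain ⟨N, hN⟩ := exists_nat_gt (w - q)⁻¹
  refine ⟨N, fun n hn => ?_⟩
  set hₙ : ℝ := ((n:ℝ) + 1)⁻¹ with hhn
  have hh0 : (0:ℝ) < hₙ := by positivity
  have hn1 : (0:ℝ) < (n:ℝ) + 1 := by positivity
  have hnw : hₙ < w - q := by
    have h1 : (w - q)⁻¹ < (n:ℝ) + 1 := by
      refine lt_of_lt_of_le hN ?_
      have : (N:ℝ) ≤ (n:ℝ) := by exact_mod_cast hn
      linarith
    have h2 := inv_strictAnti₀ (by positivity) h1
    rwa [inv_inv] at h2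
  have hint : IntervalIntegrable f volume q (q + hₙ) :=
    intervalIntegrable_of_cadlag hf hq (by linarith)
  have hdecomp : ((n:ℝ) + 1) * (∫ t in q..(q + hₙ), f t) - f q
      = ((n:ℝ) + 1) * ∫ t in q..(q + hₙ), (f t - f q) := by
    rw [intervalIntegral.integral_sub hint intervalIntegrable_const, mul_sub]
    congr 1
    rw [intervalIntegral.integral_const, add_sub_cancel_left, smul_eq_mul, hhn,
      ← mul_assoc, mul_inv_cancel₀ hn1.ne', one_mul]
  have hbd : ‖∫ t in q..(q + hₙ), (f t - f q)‖ ≤ (ε / 2) * |q + hₙ - q| := by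
    refine intervalIntegral.norm_integral_le_of_norm_le_const (fun x hx => ?_)
    rw [uIoc_of_le (by linarith : q ≤ q + hₙ)] at hx
    have hxw : x ∈ Ico q w := ⟨hx.1.le, by linarith [hx.2]⟩
    have := hIco hxw
    simp only [mem_setOf_eq, Real.dist_eq] at this
    rw [Real.norm_eq_abs]
    exact this.le
  rw [Real.dist_eq, hdecomp, abs_mul, abs_of_pos hn1]
  rw [add_sub_cancel_left, abs_of_pos hh0] at hbd
  rw [Real.norm_eq_abs] at hbd
  calc ((n:ℝ) + 1) * |∫ t in q..(q + hₙ), (f t - f q)| ≤ ((n:ℝ) + 1) * ((ε / 2) * hₙ) :=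
        mul_le_mul_of_nonneg_left hbd hn1.le
  _ = ε / 2 := by rw [hhn, mul_comm (ε / 2), ← mul_assoc, mul_inv_cancel₀ hn1.ne', one_mul]
  _ < ε := by linarith

lemma measurable_eval {q : ℝ} (hq : 0 ≤ q) :
    @Measurable Dfun ℝ J1Borel _ (fun f => f.1 q) := by
  letI : TopologicalSpace Dfun := J1Top
  letI : MeasurableSpace Dfun := J1Borel
  haveI : BorelSpace Dfun := ⟨rfl⟩
  refine measurable_of_tendsto_metrizable' atTop
    (f := fun (n : ℕ) (f : Dfun) => ((n:ℝ) + 1) * ∫ t in q..(q + ((n:ℝ) + 1)⁻¹), f.1 t)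
    (fun n => (continuous_const.mul (phi_cont hq (by positivity))).measurable) ?_
  exact tendsto_pi_nhds.2 (fun f => avg_tendsto f.2 hq)

lemma measurable_eval_comp {c : ℝ → ℝ} (hc : Measurable c) (hcr : (Set.range c).Countable)
    (hpos : ∀ t, 0 ≤ c t) :
    @Measurable (Dfun × ℝ) ℝ (@Prod.instMeasurableSpace _ _ J1Borel _) _
      (fun p => p.1.1 (c p.2)) := by
  letI : MeasurableSpace Dfun := J1Borel
  intro A hA
  have hset : (fun p : Dfun × ℝ => p.1.1 (c p.2)) ⁻¹' A
      = ⋃ q ∈ Set.range c, ({f : Dfun | f.1 q ∈ A} ×ˢ (c ⁻¹' {q})) := by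
    ext p
    simp only [mem_preimage, mem_iUnion, mem_prod, mem_setOf_eq, mem_singleton_iff, exists_prop]
    constructor
    · intro hp
      exact ⟨c p.2, ⟨p.2, rfl⟩, hp, rfl⟩
    · rintro ⟨q, _, hfA, hcq⟩
      rw [hcq]
      exact hfA
  rw [hset]
  refine MeasurableSet.biUnion hcr (fun q hq => ?_)
  obtain ⟨t, rfl⟩ := hq
  exact (measurable_eval (hpos t) hA).prod (hc (measurableSet_singleton _))

end OccAux

open OccAux in
/-- `eq:timeintunnel_measurable`. For every Borel set `B ⊆ ℝ`, the map
`f ↦ λ(t ∈ [0,∞) : f(t) ∈ B)` from `D([0,∞),ℝ)` to `[0,∞]` is measurable for the Borel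
σ-algebra of the Skorokhod `J1` topology. -/
theorem occupation_measurable (B : Set ℝ) (hB : MeasurableSet B) :
    @Measurable Dfun ENNReal J1Borel inferInstance
      (fun f => volume {t : ℝ | 0 ≤ t ∧ f.1 t ∈ B}) := by
  letI : MeasurableSpace Dfun := J1Borel
  have hH : Measurable (fun p : Dfun × ℝ => p.1.1 (max p.2 0)) := by
    refine measurable_of_tendsto_metrizable' atTop
      (f := fun n (p : Dfun × ℝ) => p.1.1 (dy n p.2))
      (fun n => measurable_eval_comp (measurable_dy n) (countable_range_dy n)
        (fun t => dy_pos n t)) ?_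
    exact tendsto_pi_nhds.2 (fun p => tendsto_dy_eval p.1.2 p.2)
  have hsmeas : MeasurableSet {p : Dfun × ℝ | 0 ≤ p.2 ∧ p.1.1 p.2 ∈ B} := by
    have hrw : {p : Dfun × ℝ | 0 ≤ p.2 ∧ p.1.1 p.2 ∈ B}
        = {p : Dfun × ℝ | 0 ≤ p.2} ∩ ((fun p : Dfun × ℝ => p.1.1 (max p.2 0)) ⁻¹' B) := by
      ext p
      simp only [mem_setOf_eq, mem_inter_iff, mem_preimage]
      constructor
      · rintro ⟨h0, hB'⟩
        exact ⟨h0, by rwa [max_eq_left h0]⟩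
      · rintro ⟨h0, hB'⟩
        exact ⟨h0, by rwa [max_eq_left h0] at hB'⟩
    rw [hrw]
    exact (measurable_snd measurableSet_Ici).inter (hH hB)
  exact measurable_measure_prodMk_left (ν := volume) hsmeas
end
end
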